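/- Every interval ipomset P has a unique presentation P = P' * ⟨V,U,U⟩, where ⟨V,U,U⟩ is a starter with U the target interface of P, and P' is an interval ipomset whose sparse step decomposition ends with a terminator or is a single identity. -/

import Mathlib

open scoped Classical

namespace HDA

/-! ### Ipomsets over a fixed alphabet -/

structure PreIpomset (σ : Type) : Type 1 where
  carrier : Type
  fin : Finite carrier
  lt : carrier → carrier → Prop
  evord : carrier → carrier → Prop
  S : Set carrier
  T : Set carrier
  lab : carrier → σ

namespace PreIpomset

variable {σ : Type}

/-- The precedence order is empty. -/
def Discrete (P : PreIpomset σ) : Prop := ∀ x y, ¬ P.lt x y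

/-- Validity: `lt` is a strict partial order which is an interval order, `evord` is acyclic,
for distinct events exactly one of the four relations holds, sources are minimal and
targets are maximal.  (All ipomsets considered are interval.) -/
structure IsIpomset (P : PreIpomset σ) : Prop where
  lt_trans : ∀ x y z, P.lt x y → P.lt y z → P.lt x z
  lt_irrefl : ∀ x, ¬ P.lt x x
  evord_acyclic : ∀ x, ¬ Relation.TransGen P.evord x x
  total : ∀ x y : P.carrier, x ≠ y → P.lt x y ∨ P.lt y x ∨ P.evord x y ∨ P.evord y x
  lt_not_evord : ∀ x y, P.lt x y → ¬ P.evord x y ∧ ¬ P.evord y x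
  src_min : ∀ x ∈ P.S, ∀ y, ¬ P.lt y x
  tgt_max : ∀ x ∈ P.T, ∀ y, ¬ P.lt x y
  interval : ∀ w x y z, P.lt w x → P.lt y z → P.lt w z ∨ P.lt y x

/-- A conclist: a discrete ipomset with empty interfaces. -/
def IsConclist (P : PreIpomset σ) : Prop :=
  P.IsIpomset ∧ P.Discrete ∧ P.S = ∅ ∧ P.T = ∅

/-- A starter `⟨U∖A,U,U⟩`. -/
def IsStarter (P : PreIpomset σ) : Prop := P.IsIpomset ∧ P.Discrete ∧ P.T = Set.univ

/-- A terminator `⟨U,U,U∖B⟩`. -/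
def IsTerminator (P : PreIpomset σ) : Prop := P.IsIpomset ∧ P.Discrete ∧ P.S = Set.univ

/-- An identity `⟨U,U,U⟩`. -/
def IsIdentityIpomset (P : PreIpomset σ) : Prop :=
  P.IsIpomset ∧ P.Discrete ∧ P.S = Set.univ ∧ P.T = Set.univ

def IsProperStarter (P : PreIpomset σ) : Prop := P.IsStarter ∧ P.S ≠ Set.univ

def IsProperTerminator (P : PreIpomset σ) : Prop := P.IsTerminator ∧ P.T ≠ Set.univ

/-- Isomorphism of (pre)ipomsets. -/
def Iso (P Q : PreIpomset σ) : Prop :=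
  ∃ f : P.carrier ≃ Q.carrier,
    (∀ x y, P.lt x y ↔ Q.lt (f x) (f y)) ∧
    (∀ x y, P.evord x y ↔ Q.evord (f x) (f y)) ∧
    (∀ x, x ∈ P.S ↔ f x ∈ Q.S) ∧
    (∀ x, x ∈ P.T ↔ f x ∈ Q.T) ∧
    (∀ x, Q.lab (f x) = P.lab x)

/-- Restriction to a subset of events, with empty interfaces. -/
def restrict (P : PreIpomset σ) (K : Set P.carrier) : PreIpomset σ where
  carrier := {x : P.carrier // x ∈ K}
  fin := by haveI := P.fin; exact inferInstance
  lt := fun x y => P.lt x.val y.val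
  evord := fun x y => P.evord x.val y.val
  S := ∅
  T := ∅
  lab := fun x => P.lab x.val

/-- The source interface of `P` as a conclist. -/
def srcIface (P : PreIpomset σ) : PreIpomset σ := P.restrict P.S

/-- The target interface of `P` as a conclist. -/
def tgtIface (P : PreIpomset σ) : PreIpomset σ := P.restrict P.T

/-- The underlying conclist (forget interfaces). -/
def conclistOf (P : PreIpomset σ) : PreIpomset σ := { P with S := ∅, T := ∅ }

/-- The identity ipomset `⟨U,U,U⟩` on the conclist underlying `P`. -/
def idOf (P : PreIpomset σ) : PreIpomset σ := { P with S := Set.univ, T := Set.univ }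

/-- The discrete ipomset `⟨S,U,T⟩` on the conclist underlying `P`. -/
def withIfaces (P : PreIpomset σ) (S T : Set P.carrier) : PreIpomset σ :=
  { P with S := S, T := T }

/-- The starter `⟨U∖A,U,U⟩` on the conclist underlying `P`. -/
def starter (P : PreIpomset σ) (A : Set P.carrier) : PreIpomset σ :=
  { P with S := Aᶜ, T := Set.univ }

/-- The terminator `⟨U,U,U∖B⟩` on the conclist underlying `P`. -/
def terminator (P : PreIpomset σ) (B : Set P.carrier) : PreIpomset σ :=
  { P with S := Set.univ, T := Bᶜ }

/-- A matching `T_P ≅ S_Q`, i.e. an isomorphism of interface conclists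
along which `P` and `Q` may be glued. -/
structure Matching (P Q : PreIpomset σ) : Type where
  g : {x : P.carrier // x ∈ P.T} ≃ {y : Q.carrier // y ∈ Q.S}
  evord_iff : ∀ x y, P.evord x.val y.val ↔ Q.evord (g x).val (g y).val
  lab_eq : ∀ x, Q.lab (g x).val = P.lab x.val

def gluePOf (P Q : PreIpomset σ) :
    P.carrier ⊕ {y : Q.carrier // y ∉ Q.S} → Option P.carrier
  | Sum.inl x => some x
  | Sum.inr _ => none

noncomputable def glueQOf (P Q : PreIpomset σ) (m : Matching P Q) :
    P.carrier ⊕ {y : Q.carrier // y ∉ Q.S} → Option Q.carrier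
  | Sum.inl x => if h : x ∈ P.T then some (m.g ⟨x, h⟩).val else none
  | Sum.inr y => some y.val

/-- The gluing `P * Q` along a matching `T_P ≅ S_Q`. -/
noncomputable def glue (P Q : PreIpomset σ) (m : Matching P Q) : PreIpomset σ where
  carrier := P.carrier ⊕ {y : Q.carrier // y ∉ Q.S}
  fin := by haveI := P.fin; haveI := Q.fin; exact inferInstance
  lt := fun u v =>
    (∃ x x', gluePOf P Q u = some x ∧ gluePOf P Q v = some x' ∧ P.lt x x') ∨
    (∃ y y', glueQOf P Q m u = some y ∧ glueQOf P Q m v = some y' ∧ Q.lt y y') ∨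
    ((∃ x, gluePOf P Q u = some x ∧ x ∉ P.T) ∧
     (∃ y, glueQOf P Q m v = some y ∧ y ∉ Q.S))
  evord := fun u v =>
    (∃ x x', gluePOf P Q u = some x ∧ gluePOf P Q v = some x' ∧ P.evord x x') ∨
    (∃ y y', glueQOf P Q m u = some y ∧ glueQOf P Q m v = some y' ∧ Q.evord y y')
  S := {u | ∃ x, gluePOf P Q u = some x ∧ x ∈ P.S}
  T := {u | ∃ y, glueQOf P Q m u = some y ∧ y ∈ Q.T}
  lab := Sum.elim P.lab fun y => Q.lab y.val

/-- `R` is (isomorphic to) the gluing `P * Q`; in particular `T_P ≅ S_Q`. -/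
def GlueRel (P Q R : PreIpomset σ) : Prop :=
  ∃ m : Matching P Q, Iso (glue P Q m) R

/-- A choice of gluing (used when a matching is known to exist). -/
noncomputable def glueChoice (P Q : PreIpomset σ) : PreIpomset σ :=
  if h : Nonempty (Matching P Q) then glue P Q h.some else P

/-- `GluesTo l R`: `R` is the gluing of the nonempty list `l` of ipomsets. -/
inductive GluesTo : List (PreIpomset σ) → PreIpomset σ → Prop
  | single {P R : PreIpomset σ} : Iso P R → GluesTo [P] R
  | cons {P : PreIpomset σ} {l : List (PreIpomset σ)} {R' R : PreIpomset σ} :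
      GluesTo l R' → GlueRel P R' R → GluesTo (P :: l) R

/-- Proper starters and proper terminators alternate. -/
def Alternating (l : List (PreIpomset σ)) : Prop :=
  l.Chain' fun P Q => (IsProperStarter P ∧ IsProperTerminator Q) ∨
    (IsProperTerminator P ∧ IsProperStarter Q)

/-- `l` is a sparse step decomposition of `R`: either a single identity, or an
alternating sequence of proper starters and proper terminators gluing to `R`. -/
def IsSparseDecomp (l : List (PreIpomset σ)) (R : PreIpomset σ) : Prop :=
  GluesTo l R ∧
  ((∃ I, l = [I] ∧ IsIdentityIpomset I) ∨
   ((∀ P ∈ l, IsProperStarter P ∨ IsProperTerminator P) ∧ Alternating l))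

/-- `P ∈ iPoms^q`: the sparse step decomposition of `P` does not end with a
proper starter (i.e. it ends with a terminator or is a single identity). -/
def InQ (P : PreIpomset σ) : Prop :=
  ∃ l, IsSparseDecomp l P ∧ ∀ Q, l.getLast? = some Q → ¬ IsProperStarter Q

end PreIpomset

open PreIpomset

variable {σ : Type}

/-! ### Languages and rational operations -/

def glueLang (L M : Set (PreIpomset σ)) : Set (PreIpomset σ) :=
  {R | ∃ P ∈ L, ∃ Q ∈ M, GlueRel P Q R}

def powLang (L : Set (PreIpomset σ)) : ℕ → Set (PreIpomset σ)
  | 0 => L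
  | n + 1 => glueLang L (powLang L n)

/-- `L⁺ = ⋃_{n ≥ 1} Lⁿ`. -/
def plusLang (L : Set (PreIpomset σ)) : Set (PreIpomset σ) := ⋃ n, powLang L n

/-- Rational languages of (interval) ipomsets: generated from `∅` and singletons
(up to isomorphism) of starters and terminators by union, gluing composition and plus. -/
inductive Rational : Set (PreIpomset σ) → Prop
  | empty : Rational ∅
  | single {P : PreIpomset σ} : IsStarter P ∨ IsTerminator P → Rational {Q | Iso Q P}
  | union {L M : Set (PreIpomset σ)} : Rational L → Rational M → Rational (L ∪ M)
  | concat {L M : Set (PreIpomset σ)} : Rational L → Rational M → Rational (glueLang L M)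
  | plus {L : Set (PreIpomset σ)} : Rational L → Rational (plusLang L)

/-! ### P-automata -/

structure PAutomaton (σ : Type) : Type 1 where
  Q : Type
  E : Type
  src : E → Q
  tgt : E → Q
  lab : E → PreIpomset σ
  mu : Q → PreIpomset σ
  start : Set Q
  accept : Set Q

namespace PAutomaton

variable {σ : Type}

/-- The axioms of a P-automaton: finite sets of states and transitions, states
labelled by conclists, transitions by interval ipomsets, with
`μ(s(e)) ≅ S_{λ(e)}` and `μ(t(e)) ≅ T_{λ(e)}`. -/
def IsPA (A : PAutomaton σ) : Prop :=
  Finite A.Q ∧ Finite A.E ∧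
  (∀ q, (A.mu q).IsConclist) ∧ (∀ e, (A.lab e).IsIpomset) ∧
  (∀ e, Iso (A.lab e).srcIface (A.mu (A.src e))) ∧
  (∀ e, Iso (A.lab e).tgtIface (A.mu (A.tgt e)))

/-- ST-automaton: every label is a starter or a terminator. -/
def IsST (A : PAutomaton σ) : Prop := ∀ e, IsStarter (A.lab e) ∨ IsTerminator (A.lab e)

/-- gST-automaton: every label is discrete. -/
def IsGST (A : PAutomaton σ) : Prop := ∀ e, (A.lab e).Discrete

/-- No transition is labelled by an identity. -/
def NoSilent (A : PAutomaton σ) : Prop := ∀ e, ¬ IsIdentityIpomset (A.lab e)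

/-- A reduced gST-automaton: no silent transitions and conditions (a)–(f). -/
def Reduced (A : PAutomaton σ) : Prop :=
  NoSilent A ∧
  (∀ e, A.tgt e ∉ A.start) ∧
  (∀ e, A.src e ∉ A.accept) ∧
  (∀ e, (A.lab e).T = Set.univ → A.tgt e ∈ A.accept) ∧
  (∀ e, (A.lab e).S = Set.univ → A.src e ∈ A.start) ∧
  (∀ e e', A.src e ∈ A.start → A.src e' = A.src e → e' = e) ∧
  (∀ e e', A.tgt e ∈ A.accept → A.tgt e' = A.tgt e → e' = e)

/-- Paths in a P-automaton, from a state to a state. -/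
inductive Path (A : PAutomaton σ) : A.Q → A.Q → Type
  | nil (q : A.Q) : Path A q q
  | cons (e : A.E) {r : A.Q} (rest : Path A (A.tgt e) r) : Path A (A.src e) r

/-- The (interval) ipomset recognized by a path, up to isomorphism:
the gluing of the labels of its transitions (an identity for a constant path). -/
inductive Rec {A : PAutomaton σ} : ∀ {p r : A.Q}, Path A p r → PreIpomset σ → Prop
  | nil (q : A.Q) (R : PreIpomset σ) : Iso (A.mu q).idOf R → Rec (Path.nil q) R
  | cons (e : A.E) {r : A.Q} (rest : Path A (A.tgt e) r) {R' R : PreIpomset σ} :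
      Rec rest R' → GlueRel (A.lab e) R' R → Rec (Path.cons e rest) R

/-- The language of a P-automaton. -/
def lang (A : PAutomaton σ) : Set (PreIpomset σ) :=
  {R | ∃ p r, ∃ α : Path A p r, p ∈ A.start ∧ r ∈ A.accept ∧ Rec α R}

/-- Dimension of a transition. -/
noncomputable def dim (A : PAutomaton σ) (e : A.E) : ℕ := Nat.card (A.lab e).carrier

/-- Number of bad starter transitions of dimension `n`. -/
noncomputable def bst (A : PAutomaton σ) (n : ℕ) : ℕ :=
  Nat.card {e : A.E // IsProperStarter (A.lab e) ∧ A.tgt e ∉ A.accept ∧ A.dim e = n}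

/-- Number of bad terminator transitions of dimension `n`. -/
noncomputable def btt (A : PAutomaton σ) (n : ℕ) : ℕ :=
  Nat.card {e : A.E // IsProperTerminator (A.lab e) ∧ A.src e ∉ A.start ∧ A.dim e = n}

/-- The automaton `𝒜_c`: remove the starter transition `c`; for every transition `e`
out of `t(c)` add a transition `e*` from `s(c)` to `t(e)` labelled `λ(c) * λ(e)`. -/
noncomputable def Ac (A : PAutomaton σ) (c : A.E) : PAutomaton σ where
  Q := A.Q
  E := {e : A.E // e ≠ c} ⊕ {e : A.E // A.src e = A.tgt c}
  src := Sum.elim (fun e => A.src e.val) fun _ => A.src c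
  tgt := Sum.elim (fun e => A.tgt e.val) fun e => A.tgt e.val
  lab := Sum.elim (fun e => A.lab e.val) fun e => glueChoice (A.lab c) (A.lab e.val)
  mu := A.mu
  start := A.start
  accept := A.accept

/-- Disjoint union of two P-automata. -/
def sumAut (A B : PAutomaton σ) : PAutomaton σ where
  Q := A.Q ⊕ B.Q
  E := A.E ⊕ B.E
  src := Sum.elim (Sum.inl ∘ A.src) (Sum.inr ∘ B.src)
  tgt := Sum.elim (Sum.inl ∘ A.tgt) (Sum.inr ∘ B.tgt)
  lab := Sum.elim A.lab B.lab
  mu := Sum.elim A.mu B.mu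
  start := Sum.inl '' A.start ∪ Sum.inr '' B.start
  accept := Sum.inl '' A.accept ∪ Sum.inr '' B.accept

/-- Concatenation `𝒜 * ℬ`: disjoint union together with identity-labelled transitions
from accepting states of `𝒜` to initial states of `ℬ` with isomorphic state labels. -/
def concatAut (A B : PAutomaton σ) : PAutomaton σ where
  Q := A.Q ⊕ B.Q
  E := A.E ⊕ B.E ⊕
    {pq : A.Q × B.Q // pq.1 ∈ A.accept ∧ pq.2 ∈ B.start ∧ Iso (A.mu pq.1) (B.mu pq.2)}
  src := Sum.elim (Sum.inl ∘ A.src)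
    (Sum.elim (Sum.inr ∘ B.src) fun pq => Sum.inl pq.val.1)
  tgt := Sum.elim (Sum.inl ∘ A.tgt)
    (Sum.elim (Sum.inr ∘ B.tgt) fun pq => Sum.inr pq.val.2)
  lab := Sum.elim A.lab (Sum.elim B.lab fun pq => (A.mu pq.val.1).idOf)
  mu := Sum.elim A.mu B.mu
  start := Sum.inl '' A.start
  accept := Sum.inr '' B.accept

/-- Kleene plus `𝒜⁺`: add identity-labelled transitions from accepting states
to initial states with isomorphic state labels. -/
def plusAut (A : PAutomaton σ) : PAutomaton σ where
  Q := A.Q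
  E := A.E ⊕
    {pq : A.Q × A.Q // pq.1 ∈ A.accept ∧ pq.2 ∈ A.start ∧ Iso (A.mu pq.1) (A.mu pq.2)}
  src := Sum.elim A.src fun pq => pq.val.1
  tgt := Sum.elim A.tgt fun pq => pq.val.2
  lab := Sum.elim A.lab fun pq => (A.mu pq.val.1).idOf
  mu := A.mu
  start := A.start
  accept := A.accept

end PAutomaton

/-! ### Partial HDAs -/

/-- `g` exhibits `V` as the sub-conclist of `U` obtained by removing the events in `K`. -/
def IsFaceEmbed (U : PreIpomset σ) (K : Set U.carrier) (V : PreIpomset σ)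
    (g : V.carrier → U.carrier) : Prop :=
  Function.Injective g ∧ Set.range g = Kᶜ ∧
  (∀ u v, V.evord u v ↔ U.evord (g u) (g v)) ∧
  (∀ u, U.lab (g u) = V.lab u)

/-- The data of a partial higher-dimensional automaton: cells labelled by conclists,
partial face maps, initial and accepting cells. -/
structure PrePHDA (σ : Type) : Type 1 where
  cell : Type
  ev : cell → PreIpomset σ
  face : (x : cell) → Set (ev x).carrier → Set (ev x).carrier → Option cell
  start : Set cell
  accept : Set cell

namespace PrePHDA

variable {σ : Type}

/-- The lax precubical identity: whenever `δ_{A,B}(x)` and `δ_{C,D}(δ_{A,B}(x))` are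
defined, `δ_{A∪C,B∪D}(x)` is defined and equal to the composite. -/
def IsLax (X : PrePHDA σ) : Prop :=
  ∀ x (A B : Set (X.ev x).carrier) y, X.face x A B = some y →
    ∀ g, IsFaceEmbed (X.ev x) (A ∪ B) (X.ev y) g →
      ∀ (C D : Set (X.ev y).carrier) z, X.face y C D = some z →
        X.face x (A ∪ g '' C) (B ∪ g '' D) = some z

/-- The axioms of a partial HDA. -/
def IsPHDA (X : PrePHDA σ) : Prop :=
  (∀ x, (X.ev x).IsConclist) ∧
  (∀ x, X.face x ∅ ∅ = some x) ∧
  (∀ x A B y, X.face x A B = some y →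
    Disjoint A B ∧ ∃ g, IsFaceEmbed (X.ev x) (A ∪ B) (X.ev y) g) ∧
  IsLax X

/-- Strictness: `δ_{C,D} ∘ δ_{A,B} = δ_{A∪C,B∪D}` as partial functions. -/
def IsStrict (X : PrePHDA σ) : Prop :=
  IsPHDA X ∧
  (∀ x (A B : Set (X.ev x).carrier) y, X.face x A B = some y →
    ∀ g, IsFaceEmbed (X.ev x) (A ∪ B) (X.ev y) g →
      ∀ C D : Set (X.ev y).carrier,
        X.face x (A ∪ g '' C) (B ∪ g '' D) = X.face y C D) ∧
  (∀ x (A B C D : Set (X.ev x).carrier),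
    Disjoint (A ∪ C) (B ∪ D) → C ∪ D ⊆ (A ∪ B)ᶜ →
    X.face x A B = none → X.face x (A ∪ C) (B ∪ D) = none)

/-- Paths in a partial HDA: sequences of upsteps and downsteps. -/
inductive Path (X : PrePHDA σ) : X.cell → X.cell → Type
  | nil (x : X.cell) : Path X x x
  | up {x z : X.cell} (y : X.cell) (A : Set (X.ev y).carrier)
      (h : X.face y A ∅ = some x) (rest : Path X y z) : Path X x z
  | down {z w : X.cell} (y : X.cell) (B : Set (X.ev y).carrier)
      (h : X.face y ∅ B = some z) (rest : Path X z w) : Path X y w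

/-- Directions of the steps of a path (`true` = upstep). -/
def Path.dirs {X : PrePHDA σ} : {x z : X.cell} → Path X x z → List Bool
  | _, _, .nil _ => []
  | _, _, .up _ _ _ rest => true :: rest.dirs
  | _, _, .down _ _ _ rest => false :: rest.dirs

/-- A path is sparse if upsteps and downsteps alternate. -/
def Path.Sparse {X : PrePHDA σ} {x z : X.cell} (α : Path X x z) : Prop :=
  α.dirs.Chain' (· ≠ ·)

/-- Concatenation of paths. -/
def Path.comp {X : PrePHDA σ} : {x y z : X.cell} → Path X x y → Path X y z → Path X x z
  | _, _, _, .nil _, β => β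
  | _, _, _, .up y A h rest, β => .up y A h (rest.comp β)
  | _, _, _, .down y B h rest, β => .down y B h (rest.comp β)

/-- The ipomset recognized by a path, up to isomorphism: the gluing of the starters
and terminators of its steps (an identity for a constant path). -/
inductive Rec {X : PrePHDA σ} : ∀ {x z : X.cell}, Path X x z → PreIpomset σ → Prop
  | nil (x : X.cell) (R : PreIpomset σ) :
      Iso (X.ev x).idOf R → Rec (Path.nil x) R
  | up {x z : X.cell} (y : X.cell) (A : Set (X.ev y).carrier)
      (h : X.face y A ∅ = some x) (rest : Path X y z) {R' R : PreIpomset σ} :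
      Rec rest R' → GlueRel ((X.ev y).starter A) R' R → Rec (Path.up y A h rest) R
  | down {z w : X.cell} (y : X.cell) (B : Set (X.ev y).carrier)
      (h : X.face y ∅ B = some z) (rest : Path X z w) {R' R : PreIpomset σ} :
      Rec rest R' → GlueRel ((X.ev y).terminator B) R' R → Rec (Path.down y B h rest) R

/-- The language of a partial HDA. -/
def lang (X : PrePHDA σ) : Set (PreIpomset σ) :=
  {R | ∃ x z, ∃ α : Path X x z, x ∈ X.start ∧ z ∈ X.accept ∧ Rec α R}

/-- `X(K,P)`: cells reachable from `K` by a path recognizing `P`. -/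
def track (X : PrePHDA σ) (K : Set X.cell) (P : PreIpomset σ) : Set X.cell :=
  {x | ∃ s, ∃ α : Path X s x, s ∈ K ∧ Rec α P}

/-- Deterministic partial HDA: at most one initial cell per conclist, and lower
face maps are "injective" in the appropriate sense. -/
def Deterministic (X : PrePHDA σ) : Prop :=
  (∀ x y, x ∈ X.start → y ∈ X.start → Iso (X.ev x) (X.ev y) → x = y) ∧
  (∀ (y y' : X.cell) (A : Set (X.ev y).carrier) (A' : Set (X.ev y').carrier)
      (x : X.cell), X.face y A ∅ = some x → X.face y' A' ∅ = some x →
    (∃ f : (X.ev y).carrier ≃ (X.ev y').carrier,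
      (∀ u v, (X.ev y).evord u v ↔ (X.ev y').evord (f u) (f v)) ∧
      (∀ u, (X.ev y').lab (f u) = (X.ev y).lab u) ∧ f '' A = A') → y = y')

end PrePHDA

/-! ### Relational HDAs -/

/-- The data of a relational HDA: face relations instead of partial face maps. -/
structure PreRHDA (σ : Type) : Type 1 where
  cell : Type
  ev : cell → PreIpomset σ
  face : (x : cell) → Set (ev x).carrier → Set (ev x).carrier → Set cell
  start : Set cell
  accept : Set cell

namespace PreRHDA

variable {σ : Type}

/-- The axioms of a relational HDA, with the lax precubical identity
`δ_{C,D} ∘ δ_{A,B} ⊆ δ_{A∪C,B∪D}`. -/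
def IsRHDA (X : PreRHDA σ) : Prop :=
  (∀ x, (X.ev x).IsConclist) ∧
  (∀ x, X.face x ∅ ∅ = {x}) ∧
  (∀ x A B y, y ∈ X.face x A B →
    Disjoint A B ∧ ∃ g, IsFaceEmbed (X.ev x) (A ∪ B) (X.ev y) g) ∧
  (∀ x (A B : Set (X.ev x).carrier) y, y ∈ X.face x A B →
    ∀ g, IsFaceEmbed (X.ev x) (A ∪ B) (X.ev y) g →
      ∀ (C D : Set (X.ev y).carrier) z, z ∈ X.face y C D →
        z ∈ X.face x (A ∪ g '' C) (B ∪ g '' D))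

/-- Paths in a relational HDA. -/
inductive Path (X : PreRHDA σ) : X.cell → X.cell → Type 1
  | nil (x : X.cell) : Path X x x
  | up {x z : X.cell} (y : X.cell) (A : Set (X.ev y).carrier)
      (h : x ∈ X.face y A ∅) (rest : Path X y z) : Path X x z
  | down {z w : X.cell} (y : X.cell) (B : Set (X.ev y).carrier)
      (h : z ∈ X.face y ∅ B) (rest : Path X z w) : Path X y w

/-- The ipomset recognized by a path in a relational HDA. -/
inductive Rec {X : PreRHDA σ} : ∀ {x z : X.cell}, Path X x z → PreIpomset σ → Prop
  | nil (x : X.cell) (R : PreIpomset σ) :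
      Iso (X.ev x).idOf R → Rec (Path.nil x) R
  | up {x z : X.cell} (y : X.cell) (A : Set (X.ev y).carrier)
      (h : x ∈ X.face y A ∅) (rest : Path X y z) {R' R : PreIpomset σ} :
      Rec rest R' → GlueRel ((X.ev y).starter A) R' R → Rec (Path.up y A h rest) R
  | down {z w : X.cell} (y : X.cell) (B : Set (X.ev y).carrier)
      (h : z ∈ X.face y ∅ B) (rest : Path X z w) {R' R : PreIpomset σ} :
      Rec rest R' → GlueRel ((X.ev y).terminator B) R' R → Rec (Path.down y B h rest) R

/-- The language of a relational HDA. -/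
def lang (X : PreRHDA σ) : Set (PreIpomset σ) :=
  {R | ∃ x z, ∃ α : Path X x z, x ∈ X.start ∧ z ∈ X.accept ∧ Rec α R}

/-- The ST-automaton `ST(X)` of a relational HDA `X`: states are cells, transitions
mimic the starting and terminating of events. -/
def stAut (X : PreRHDA σ) : PAutomaton σ where
  Q := X.cell
  E := (Σ q : X.cell, Σ A : Set (X.ev q).carrier, {p : X.cell // p ∈ X.face q A ∅}) ⊕
       (Σ q : X.cell, Σ B : Set (X.ev q).carrier, {r : X.cell // r ∈ X.face q ∅ B})
  src := Sum.elim (fun t => t.2.2.val) fun t => t.1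
  tgt := Sum.elim (fun t => t.1) fun t => t.2.2.val
  lab := Sum.elim (fun t => (X.ev t.1).starter t.2.1) fun t => (X.ev t.1).terminator t.2.1
  mu := X.ev
  start := X.start
  accept := X.accept

end PreRHDA

/-! ### The partial HDA of a reduced gST-automaton -/

open PAutomaton

/-- The cell representing a state `q` in `X(𝒜)`: `q` is merged with a terminator
transition out of it or a starter transition into it, if such exists. -/
noncomputable def cellOfState (A : PAutomaton σ) (q : A.Q) : A.E ⊕ A.Q :=
  if h : ∃ e, IsTerminator (A.lab e) ∧ A.src e = q then Sum.inl h.choose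
  else if h' : ∃ e, IsStarter (A.lab e) ∧ A.tgt e = q then Sum.inl h'.choose
  else Sum.inr q

/-- `X(𝒜)`: cells are `(Q ⊔ E)/∼`, with the only defined (nontrivial) face maps
`δ⁰_{U∖S}([e]) = [s(e)]` and `δ¹_{U∖T}([e]) = [t(e)]` for `λ(e) = ⟨S,U,T⟩`. -/
noncomputable def XofA (A : PAutomaton σ) : PrePHDA σ where
  cell := A.E ⊕ A.Q
  ev := Sum.elim (fun e => (A.lab e).conclistOf) A.mu
  face := fun x =>
    match x with
    | Sum.inl e => fun As Bs =>
        if As = ∅ ∧ Bs = ∅ then some (Sum.inl e)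
        else if As = (A.lab e).Sᶜ ∧ Bs = ∅ then some (cellOfState A (A.src e))
        else if As = ∅ ∧ Bs = (A.lab e).Tᶜ then some (cellOfState A (A.tgt e))
        else none
    | Sum.inr q => fun As Bs =>
        if As = ∅ ∧ Bs = ∅ then some (Sum.inr q) else none
  start := cellOfState A '' A.start
  accept := cellOfState A '' A.accept

end HDA

namespace HDA

namespace PreIpomset

variable {σ : Type}

/-! ### Basics on isomorphisms -/

theorem iso_refl (P : PreIpomset σ) : Iso P P :=
  ⟨Equiv.refl _, fun _ _ => Iff.rfl, fun _ _ => Iff.rfl, fun _ => Iff.rfl, fun _ => Iff.rfl,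
    fun _ => rfl⟩

theorem iso_symm {P Q : PreIpomset σ} (h : Iso P Q) : Iso Q P := by
  obtain ⟨f, h1, h2, h3, h4, h5⟩ := h
  refine ⟨f.symm, fun x y => ?_, fun x y => ?_, fun x => ?_, fun x => ?_, fun x => ?_⟩
  · rw [h1 (f.symm x) (f.symm y)]; simp
  · rw [h2 (f.symm x) (f.symm y)]; simp
  · rw [h3 (f.symm x)]; simp
  · rw [h4 (f.symm x)]; simp
  · rw [← h5 (f.symm x), f.apply_symm_apply]

theorem iso_trans {P Q R : PreIpomset σ} (h : Iso P Q) (h' : Iso Q R) : Iso P R := by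
  obtain ⟨f, h1, h2, h3, h4, h5⟩ := h
  obtain ⟨g, g1, g2, g3, g4, g5⟩ := h'
  exact ⟨f.trans g, fun x y => (h1 x y).trans (g1 _ _), fun x y => (h2 x y).trans (g2 _ _),
    fun x => (h3 x).trans (g3 _), fun x => (h4 x).trans (g4 _),
    fun x => (g5 (f x)).trans (h5 x)⟩

/-- Every event in the target interface has, somewhere outside the target interface,
an event not below it. -/
def GoodT (R : PreIpomset σ) : Prop := ∀ x ∈ R.T, ∃ w, w ∉ R.T ∧ ¬ R.lt w x

def GoodQ (R : PreIpomset σ) : Prop := ∀ x, x ∈ R.T → x ∉ R.S → ∃ w, w ∉ R.T ∧ ¬ R.lt w x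

theorem GoodT.goodQ {R : PreIpomset σ} (h : GoodT R) : GoodQ R := fun x hx _ => h x hx

theorem goodT_of_iso {P Q : PreIpomset σ} (h : Iso P Q) (hP : GoodT P) : GoodT Q := by
  obtain ⟨f, h1, h2, h3, h4, h5⟩ := h
  intro x hx
  obtain ⟨w, hw1, hw2⟩ := hP (f.symm x) (by rw [h4 (f.symm x)]; simpa)
  refine ⟨f w, by rw [← h4 w]; exact hw1, fun hc => hw2 ?_⟩
  rw [h1 w (f.symm x)]; simpa using hc

theorem goodQ_of_iso {P Q : PreIpomset σ} (h : Iso P Q) (hP : GoodQ P) : GoodQ Q := by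
  obtain ⟨f, h1, h2, h3, h4, h5⟩ := h
  intro x hx hxS
  obtain ⟨w, hw1, hw2⟩ := hP (f.symm x) (by rw [h4 (f.symm x)]; simpa)
    (by rw [h3 (f.symm x)]; simpa)
  refine ⟨f w, by rw [← h4 w]; exact hw1, fun hc => hw2 ?_⟩
  rw [h1 w (f.symm x)]; simpa using hc

theorem identity_of_iso {P Q : PreIpomset σ} (h : Iso P Q) (h1 : P.S = Set.univ)
    (h2 : P.T = Set.univ) (h3 : P.Discrete) :
    Q.S = Set.univ ∧ Q.T = Set.univ ∧ Q.Discrete := by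
  obtain ⟨f, hlt, hev, hS, hT, hlab⟩ := h
  refine ⟨Set.eq_univ_iff_forall.2 fun x => ?_, Set.eq_univ_iff_forall.2 fun x => ?_,
    fun x y hxy => ?_⟩
  · have := (hS (f.symm x)).1 (by rw [h1]; trivial); simpa using this
  · have := (hT (f.symm x)).1 (by rw [h2]; trivial); simpa using this
  · have := (hlt (f.symm x) (f.symm y)).2 (by simpa using hxy)
    exact h3 _ _ this

/-! ### Unfolding lemmas for gluings -/

section GlueLemmas

variable {P Q : PreIpomset σ} (m : Matching P Q)

theorem gluePOf_inl (x : P.carrier) : gluePOf P Q (Sum.inl x) = some x := rfl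

theorem gluePOf_inr (y : {y : Q.carrier // y ∉ Q.S}) : gluePOf P Q (Sum.inr y) = none := rfl

theorem glueQOf_inl_pos {x : P.carrier} (h : x ∈ P.T) :
    glueQOf P Q m (Sum.inl x) = some (m.g ⟨x, h⟩).val := by
  simp only [glueQOf]; exact dif_pos h

theorem glueQOf_inl_neg {x : P.carrier} (h : x ∉ P.T) :
    glueQOf P Q m (Sum.inl x) = none := by
  simp only [glueQOf]; exact dif_neg h

theorem glueQOf_inr (y : {y : Q.carrier // y ∉ Q.S}) :
    glueQOf P Q m (Sum.inr y) = some y.val := rfl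

theorem glue_lt_inl_inl {a b : P.carrier} :
    (glue P Q m).lt (Sum.inl a) (Sum.inl b) ↔
      P.lt a b ∨ ∃ (ha : a ∈ P.T) (hb : b ∈ P.T),
        Q.lt (m.g ⟨a, ha⟩).val (m.g ⟨b, hb⟩).val := by
  show (∃ x x', _ ∧ _ ∧ _) ∨ (∃ y y', _ ∧ _ ∧ _) ∨ (_ ∧ _) ↔ _
  constructor
  · rintro (⟨x, x', hx, hx', hlt⟩ | ⟨y, y', hy, hy', hlt⟩ | ⟨⟨x, hx, hxT⟩, ⟨y, hy, hyS⟩⟩)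
    · cases Option.some.injEq .. ▸ hx
      exact Or.inl (by cases (Option.some.inj hx); cases (Option.some.inj hx'); exact hlt)
    · by_cases ha : a ∈ P.T
      · by_cases hb : b ∈ P.T
        · rw [glueQOf_inl_pos m ha] at hy; rw [glueQOf_inl_pos m hb] at hy'
          cases Option.some.inj hy; cases Option.some.inj hy'
          exact Or.inr ⟨ha, hb, hlt⟩
        · rw [glueQOf_inl_neg m hb] at hy'; cases hy'
      · rw [glueQOf_inl_neg m ha] at hy; cases hy
    · by_cases hb : b ∈ P.T
      · rw [glueQOf_inl_pos m hb] at hy; cases Option.some.inj hy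
        exact absurd (m.g ⟨b, hb⟩).prop hyS
      · rw [glueQOf_inl_neg m hb] at hy; cases hy
  · rintro (hlt | ⟨ha, hb, hlt⟩)
    · exact Or.inl ⟨a, b, rfl, rfl, hlt⟩
    · exact Or.inr (Or.inl ⟨_, _, glueQOf_inl_pos m ha, glueQOf_inl_pos m hb, hlt⟩)

end GlueLemmas

end PreIpomset

end HDA

namespace HDA
namespace PreIpomset
variable {σ : Type}

section GlueLemmas2

variable {P Q : PreIpomset σ} (m : Matching P Q)

theorem glue_lt_inl_inr {a : P.carrier} {y : {y : Q.carrier // y ∉ Q.S}} :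
    (glue P Q m).lt (Sum.inl a) (Sum.inr y) ↔
      (∃ (ha : a ∈ P.T), Q.lt (m.g ⟨a, ha⟩).val y.val) ∨ a ∉ P.T := by
  show (∃ x x', _ ∧ _ ∧ _) ∨ (∃ y' y'', _ ∧ _ ∧ _) ∨ (_ ∧ _) ↔ _
  constructor
  · rintro (⟨x, x', hx, hx', hlt⟩ | ⟨y', y'', hy, hy', hlt⟩ | ⟨⟨x, hx, hxT⟩, _⟩)
    · cases hx'
    · by_cases ha : a ∈ P.T
      · rw [glueQOf_inl_pos m ha] at hy; rw [glueQOf_inr] at hy'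
        cases Option.some.inj hy; cases Option.some.inj hy'
        exact Or.inl ⟨ha, hlt⟩
      · exact Or.inr ha
    · cases Option.some.inj hx; exact Or.inr hxT
  · rintro (⟨ha, hlt⟩ | ha)
    · exact Or.inr (Or.inl ⟨_, _, glueQOf_inl_pos m ha, glueQOf_inr m y, hlt⟩)
    · exact Or.inr (Or.inr ⟨⟨a, rfl, ha⟩, ⟨y.val, glueQOf_inr m y, y.prop⟩⟩)

theorem glue_lt_inr_inl {y : {y : Q.carrier // y ∉ Q.S}} {b : P.carrier} :
    (glue P Q m).lt (Sum.inr y) (Sum.inl b) ↔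
      ∃ (hb : b ∈ P.T), Q.lt y.val (m.g ⟨b, hb⟩).val := by
  show (∃ x x', _ ∧ _ ∧ _) ∨ (∃ y' y'', _ ∧ _ ∧ _) ∨ (_ ∧ _) ↔ _
  constructor
  · rintro (⟨x, x', hx, hx', hlt⟩ | ⟨y', y'', hy, hy', hlt⟩ | ⟨⟨x, hx, hxT⟩, _⟩)
    · cases hx
    · by_cases hb : b ∈ P.T
      · rw [glueQOf_inl_pos m hb] at hy'; rw [glueQOf_inr] at hy
        cases Option.some.inj hy; cases Option.some.inj hy'
        exact ⟨hb, hlt⟩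
      · rw [glueQOf_inl_neg m hb] at hy'; cases hy'
    · cases hx
  · rintro ⟨hb, hlt⟩
    exact Or.inr (Or.inl ⟨_, _, glueQOf_inr m y, glueQOf_inl_pos m hb, hlt⟩)

theorem glue_lt_inr_inr {y y' : {y : Q.carrier // y ∉ Q.S}} :
    (glue P Q m).lt (Sum.inr y) (Sum.inr y') ↔ Q.lt y.val y'.val := by
  show (∃ x x', _ ∧ _ ∧ _) ∨ (∃ z z', _ ∧ _ ∧ _) ∨ (_ ∧ _) ↔ _
  constructor
  · rintro (⟨x, x', hx, hx', hlt⟩ | ⟨z, z', hy, hy', hlt⟩ | ⟨⟨x, hx, hxT⟩, _⟩)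
    · cases hx
    · rw [glueQOf_inr] at hy hy'
      cases Option.some.inj hy; cases Option.some.inj hy'; exact hlt
    · cases hx
  · intro hlt
    exact Or.inr (Or.inl ⟨_, _, glueQOf_inr m y, glueQOf_inr m y', hlt⟩)

theorem glue_evord_inl_inl {a b : P.carrier} :
    (glue P Q m).evord (Sum.inl a) (Sum.inl b) ↔
      P.evord a b ∨ ∃ (ha : a ∈ P.T) (hb : b ∈ P.T),
        Q.evord (m.g ⟨a, ha⟩).val (m.g ⟨b, hb⟩).val := by
  show (∃ x x', _ ∧ _ ∧ _) ∨ (∃ y y', _ ∧ _ ∧ _) ↔ _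
  constructor
  · rintro (⟨x, x', hx, hx', hlt⟩ | ⟨y, y', hy, hy', hlt⟩)
    · cases Option.some.inj hx; cases Option.some.inj hx'; exact Or.inl hlt
    · by_cases ha : a ∈ P.T
      · by_cases hb : b ∈ P.T
        · rw [glueQOf_inl_pos m ha] at hy; rw [glueQOf_inl_pos m hb] at hy'
          cases Option.some.inj hy; cases Option.some.inj hy'
          exact Or.inr ⟨ha, hb, hlt⟩
        · rw [glueQOf_inl_neg m hb] at hy'; cases hy'
      · rw [glueQOf_inl_neg m ha] at hy; cases hy
  · rintro (hev | ⟨ha, hb, hev⟩)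
    · exact Or.inl ⟨a, b, rfl, rfl, hev⟩
    · exact Or.inr ⟨_, _, glueQOf_inl_pos m ha, glueQOf_inl_pos m hb, hev⟩

theorem glue_evord_inl_inr {a : P.carrier} {y : {y : Q.carrier // y ∉ Q.S}} :
    (glue P Q m).evord (Sum.inl a) (Sum.inr y) ↔
      ∃ (ha : a ∈ P.T), Q.evord (m.g ⟨a, ha⟩).val y.val := by
  show (∃ x x', _ ∧ _ ∧ _) ∨ (∃ y' y'', _ ∧ _ ∧ _) ↔ _
  constructor
  · rintro (⟨x, x', hx, hx', hlt⟩ | ⟨y', y'', hy, hy', hlt⟩)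
    · cases hx'
    · by_cases ha : a ∈ P.T
      · rw [glueQOf_inl_pos m ha] at hy; rw [glueQOf_inr] at hy'
        cases Option.some.inj hy; cases Option.some.inj hy'
        exact ⟨ha, hlt⟩
      · rw [glueQOf_inl_neg m ha] at hy; cases hy
  · rintro ⟨ha, hev⟩
    exact Or.inr ⟨_, _, glueQOf_inl_pos m ha, glueQOf_inr m y, hev⟩

theorem glue_evord_inr_inl {y : {y : Q.carrier // y ∉ Q.S}} {b : P.carrier} :
    (glue P Q m).evord (Sum.inr y) (Sum.inl b) ↔
      ∃ (hb : b ∈ P.T), Q.evord y.val (m.g ⟨b, hb⟩).val := by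
  show (∃ x x', _ ∧ _ ∧ _) ∨ (∃ y' y'', _ ∧ _ ∧ _) ↔ _
  constructor
  · rintro (⟨x, x', hx, hx', hlt⟩ | ⟨y', y'', hy, hy', hlt⟩)
    · cases hx
    · by_cases hb : b ∈ P.T
      · rw [glueQOf_inl_pos m hb] at hy'; rw [glueQOf_inr] at hy
        cases Option.some.inj hy; cases Option.some.inj hy'
        exact ⟨hb, hlt⟩
      · rw [glueQOf_inl_neg m hb] at hy'; cases hy'
  · rintro ⟨hb, hev⟩
    exact Or.inr ⟨_, _, glueQOf_inr m y, glueQOf_inl_pos m hb, hev⟩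

theorem glue_evord_inr_inr {y y' : {y : Q.carrier // y ∉ Q.S}} :
    (glue P Q m).evord (Sum.inr y) (Sum.inr y') ↔ Q.evord y.val y'.val := by
  show (∃ x x', _ ∧ _ ∧ _) ∨ (∃ z z', _ ∧ _ ∧ _) ↔ _
  constructor
  · rintro (⟨x, x', hx, hx', hlt⟩ | ⟨z, z', hy, hy', hlt⟩)
    · cases hx
    · rw [glueQOf_inr] at hy hy'
      cases Option.some.inj hy; cases Option.some.inj hy'; exact hlt
  · intro hev
    exact Or.inr ⟨_, _, glueQOf_inr m y, glueQOf_inr m y', hev⟩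

theorem glue_S_inl {a : P.carrier} : Sum.inl a ∈ (glue P Q m).S ↔ a ∈ P.S := by
  show (∃ x, _ ∧ _) ↔ _
  constructor
  · rintro ⟨x, hx, hxS⟩; cases Option.some.inj hx; exact hxS
  · intro h; exact ⟨a, rfl, h⟩

theorem glue_S_inr {y : {y : Q.carrier // y ∉ Q.S}} : Sum.inr y ∉ (glue P Q m).S := by
  rintro ⟨x, hx, hxS⟩; cases hx

theorem glue_T_inl {a : P.carrier} :
    Sum.inl a ∈ (glue P Q m).T ↔ ∃ (ha : a ∈ P.T), (m.g ⟨a, ha⟩).val ∈ Q.T := by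
  show (∃ y, _ ∧ _) ↔ _
  constructor
  · rintro ⟨y, hy, hyT⟩
    by_cases ha : a ∈ P.T
    · rw [glueQOf_inl_pos m ha] at hy; cases Option.some.inj hy; exact ⟨ha, hyT⟩
    · rw [glueQOf_inl_neg m ha] at hy; cases hy
  · rintro ⟨ha, hT⟩; exact ⟨_, glueQOf_inl_pos m ha, hT⟩

theorem glue_T_inr {y : {y : Q.carrier // y ∉ Q.S}} :
    Sum.inr y ∈ (glue P Q m).T ↔ y.val ∈ Q.T := by
  show (∃ z, _ ∧ _) ↔ _
  constructor
  · rintro ⟨z, hz, hzT⟩; cases Option.some.inj hz; exact hzT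
  · intro h; exact ⟨y.val, glueQOf_inr m y, h⟩

theorem glue_lab_inl (a : P.carrier) : (glue P Q m).lab (Sum.inl a) = P.lab a := rfl

theorem glue_lab_inr (y : {y : Q.carrier // y ∉ Q.S}) :
    (glue P Q m).lab (Sum.inr y) = Q.lab y.val := rfl

end GlueLemmas2

end PreIpomset
end HDA

namespace HDA
namespace PreIpomset
variable {σ : Type}

/-! ### Sub-ipomsets -/

/-- Restriction of `P` to `K`, with interfaces induced by `S'` and `T'`. -/
def sub (P : PreIpomset σ) (K S' T' : Set P.carrier) : PreIpomset σ where
  carrier := {x : P.carrier // x ∈ K}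
  fin := by haveI := P.fin; exact inferInstance
  lt := fun x y => P.lt x.val y.val
  evord := fun x y => P.evord x.val y.val
  S := {x | x.val ∈ S'}
  T := {x | x.val ∈ T'}
  lab := fun x => P.lab x.val

theorem sub_isIpomset {P : PreIpomset σ} (hP : P.IsIpomset) {K S' T' : Set P.carrier}
    (hS : ∀ x ∈ K, x ∈ S' → ∀ y ∈ K, ¬ P.lt y x)
    (hT : ∀ x ∈ K, x ∈ T' → ∀ y ∈ K, ¬ P.lt x y) :
    (P.sub K S' T').IsIpomset := by
  refine ⟨fun x y z h1 h2 => hP.lt_trans _ _ _ h1 h2, fun x => hP.lt_irrefl _,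
    fun x hx => hP.evord_acyclic x.val ?_, fun x y hxy => ?_,
    fun x y h => hP.lt_not_evord _ _ h, fun x hx y => hS _ x.prop hx _ y.prop,
    fun x hx y => hT _ x.prop hx _ y.prop, fun w x y z h1 h2 => hP.interval _ _ _ _ h1 h2⟩
  · exact Relation.TransGen.lift Subtype.val (fun a b h => h) _ _ hx
  · exact hP.total _ _ (fun h => hxy (Subtype.ext h))

theorem sub_discrete {P : PreIpomset σ} {K S' T' : Set P.carrier}
    (hK : ∀ x ∈ K, ∀ y ∈ K, ¬ P.lt x y) : (P.sub K S' T').Discrete :=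
  fun x y h => hK _ x.prop _ y.prop h

/-! ### Gluings are `GoodT` when the right factor is -/

theorem goodT_glue {Pl Q : PreIpomset σ} (hPl : Pl.IsIpomset) (m : Matching Pl Q)
    (hQ : GoodT Q) : GoodT (glue Pl Q m) := by
  intro u hu
  -- extract the event of `Q` corresponding to `u`
  obtain ⟨y, hy, hyT⟩ := hu
  obtain ⟨w', hw'1, hw'2⟩ := hQ y hyT
  by_cases hw'S : w' ∈ Q.S
  · have key : ∀ (ha : (m.g.symm ⟨w', hw'S⟩).val ∈ Pl.T),
        m.g ⟨(m.g.symm ⟨w', hw'S⟩).val, ha⟩ = ⟨w', hw'S⟩ := by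
      intro ha
      rw [show (⟨(m.g.symm ⟨w', hw'S⟩).val, ha⟩ : {x // x ∈ Pl.T}) = m.g.symm ⟨w', hw'S⟩
        from Subtype.ext rfl, m.g.apply_symm_apply]
    refine ⟨Sum.inl (m.g.symm ⟨w', hw'S⟩).val, ?_, ?_⟩
    · erw [glue_T_inl]
      rintro ⟨ha, hT⟩
      apply hw'1
      rw [key ha] at hT; exact hT
    · intro hlt
      rcases u with a | z
      · rw [glue_lt_inl_inl] at hlt
        rcases hlt with h | ⟨ha, hb, h⟩
        · exact hPl.tgt_max _ (m.g.symm ⟨w', hw'S⟩).prop _ h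
        · apply hw'2
          rw [key ha] at h
          rw [glueQOf_inl_pos m hb] at hy
          cases Option.some.inj hy
          exact h
      · rw [glue_lt_inl_inr] at hlt
        rcases hlt with ⟨ha, h⟩ | ha
        · apply hw'2
          rw [key ha] at h
          rw [glueQOf_inr] at hy
          cases Option.some.inj hy
          exact h
        · exact ha (m.g.symm ⟨w', hw'S⟩).prop
  · refine ⟨Sum.inr ⟨w', hw'S⟩, ?_, ?_⟩
    · erw [glue_T_inr]; exact hw'1
    · intro hlt
      rcases u with a | z
      · rw [glue_lt_inr_inl] at hlt
        obtain ⟨hb, h⟩ := hlt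
        rw [glueQOf_inl_pos m hb] at hy
        cases Option.some.inj hy
        exact hw'2 h
      · rw [glue_lt_inr_inr] at hlt
        rw [glueQOf_inr] at hy
        cases Option.some.inj hy
        exact hw'2 hlt

theorem goodT_of_gluesTo {l : List (PreIpomset σ)} {R : PreIpomset σ}
    (hg : GluesTo l R) (hl : ∀ Q ∈ l, Q.IsIpomset)
    (hlast : ∀ Q, l.getLast? = some Q → GoodT Q) : GoodT R := by
  induction hg with
  | @single P R hiso =>
      exact goodT_of_iso hiso (hlast P rfl)
  | @cons P l R' R hg hrel ih =>
      obtain ⟨m, hiso⟩ := hrel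
      have hl' : l ≠ [] := by
        cases hg with
        | single _ => simp
        | cons _ _ => simp
      have hR' : GoodT R' := by
        refine ih (fun Q hQ => hl Q (List.mem_cons_of_mem _ hQ)) (fun Q hQ => hlast Q ?_)
        exact List.mem_getLast?_cons hQ
      exact goodT_of_iso hiso (goodT_glue (hl P (List.mem_cons_self)) m hR')

theorem goodQ_of_inQ {R : PreIpomset σ} (h : InQ R) : GoodQ R := by
  obtain ⟨l, ⟨hg, hdis⟩, hlast⟩ := h
  rcases hdis with ⟨I, rfl, hI⟩ | ⟨hprop, halt⟩
  · cases hg with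
    | single hiso =>
        refine goodQ_of_iso hiso (fun x hx hxS => absurd ?_ hxS)
        rw [hI.2.2.1]; trivial
    | cons hg' _ => cases hg'
  · have hne : l ≠ [] := by cases hg <;> simp
    obtain ⟨Q, hQ⟩ := List.getLast?_isSome.2 hne |> Option.isSome_iff_exists.1
    have hQl : Q ∈ l := by
      obtain ⟨h, rfl⟩ := List.mem_getLast?_eq_getLast hQ
      exact List.getLast_mem h
    have hQT : IsProperTerminator Q := by
      rcases hprop Q hQl with h | h
      · exact absurd h (hlast Q hQ)
      · exact h
    refine GoodT.goodQ (goodT_of_gluesTo hg (fun Q' hQ' => ?_) (fun Q' hQ' => ?_))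
    · rcases hprop Q' hQ' with h | h
      · exact h.1.1
      · exact h.1.1
    · rw [hQ] at hQ'; cases Option.some.inj hQ'
      intro x hx
      obtain ⟨w, hw⟩ := (Set.ne_univ_iff_exists_notMem _).1 hQT.2
      exact ⟨w, hw, fun hlt => hQT.1.2.1 _ _ hlt⟩

end PreIpomset
end HDA

namespace HDA
namespace PreIpomset
variable {σ : Type}

/-! ### Right unit law -/

theorem glue_right_unit {Pl Q : PreIpomset σ} (m : Matching Pl Q)
    (hQS : Q.S = Set.univ) (hQT : Q.T = Set.univ) (hQD : Q.Discrete) :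
    Iso (glue Pl Q m) Pl := by
  have hempty : ∀ y : {y : Q.carrier // y ∉ Q.S}, False := fun y =>
    y.prop (Set.eq_univ_iff_forall.1 hQS y.val)
  refine ⟨Equiv.ofBijective (Sum.elim id (fun y => (hempty y).elim)) ⟨?_, ?_⟩,
    ?_, ?_, ?_, ?_, ?_⟩
  · rintro (a | y) (b | y') h
    · exact congrArg Sum.inl h
    · exact (hempty y').elim
    · exact (hempty y).elim
    · exact (hempty y).elim
  · intro x; exact ⟨Sum.inl x, rfl⟩
  · rintro (a | y) (b | y')
    · show (glue Pl Q m).lt _ _ ↔ Pl.lt a b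
      rw [glue_lt_inl_inl]
      constructor
      · rintro (h | ⟨ha, hb, h⟩)
        · exact h
        · exact absurd h (hQD _ _)
      · exact Or.inl
    · exact (hempty y').elim
    · exact (hempty y).elim
    · exact (hempty y).elim
  · rintro (a | y) (b | y')
    · show (glue Pl Q m).evord _ _ ↔ Pl.evord a b
      rw [glue_evord_inl_inl]
      constructor
      · rintro (h | ⟨ha, hb, h⟩)
        · exact h
        · exact (m.evord_iff ⟨a, ha⟩ ⟨b, hb⟩).2 h
      · exact Or.inl
    · exact (hempty y').elim
    · exact (hempty y).elim
    · exact (hempty y).elim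
  · rintro (a | y)
    · exact glue_S_inl m
    · exact (hempty y).elim
  · rintro (a | y)
    · show _ ↔ a ∈ Pl.T
      erw [glue_T_inl]
      exact ⟨fun ⟨h, _⟩ => h, fun h => ⟨h, Set.eq_univ_iff_forall.1 hQT _⟩⟩
    · exact (hempty y).elim
  · rintro (a | y)
    · rfl
    · exact (hempty y).elim

/-! ### The distinguished subsets -/

/-- Events which can be started by the last factor. -/
def AA (P : PreIpomset σ) : Set P.carrier :=
  {x | x ∈ P.T ∧ x ∉ P.S ∧ ∀ w, w ∉ P.T → P.lt w x}

/-- Events which can be terminated by the first factor. -/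
def BB (P : PreIpomset σ) : Set P.carrier :=
  {x | x ∈ P.S ∧ x ∉ P.T ∧ ∀ v, v ∉ P.S → P.lt x v}

/-- Unstarted minimal events. -/
def A1 (P : PreIpomset σ) : Set P.carrier :=
  {x | x ∉ P.S ∧ ∀ w, ¬ P.lt w x}

/-! ### Interval order facts -/

theorem exists_min_below {P : PreIpomset σ} (hP : P.IsIpomset) {u v : P.carrier}
    (h : P.lt u v) : ∃ u₀, P.lt u₀ v ∧ ∀ w, ¬ P.lt w u₀ := by
  haveI := P.fin
  have main : ∀ (n : ℕ) (u v : P.carrier), {w | P.lt w u}.ncard ≤ n → P.lt u v →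
      ∃ u₀, P.lt u₀ v ∧ ∀ w, ¬ P.lt w u₀ := by
    intro n
    induction n with
    | zero =>
        intro u v hn h
        refine ⟨u, h, fun w hw => ?_⟩
        have h0 : {w | P.lt w u} = ∅ := Set.ncard_eq_zero (Set.toFinite _) |>.1 (Nat.le_zero.1 hn)
        rw [Set.eq_empty_iff_forall_notMem] at h0
        exact h0 w hw
    | succ n ih =>
        intro u v hn h
        by_cases hu : ∀ w, ¬ P.lt w u
        · exact ⟨u, h, hu⟩
        · push_neg at hu
          obtain ⟨w, hw⟩ := hu
          have hsub : {w' | P.lt w' w} ⊂ {w' | P.lt w' u} := by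
            constructor
            · intro w' hw'; exact hP.lt_trans _ _ _ hw' hw
            · intro hc
              exact hP.lt_irrefl w (hc hw)
          have := Set.ncard_lt_ncard hsub (Set.toFinite _)
          exact ih w v (by omega) (hP.lt_trans _ _ _ hw h)
  exact main {w | P.lt w u}.ncard u v le_rfl h

/-- Up-sets are totally ordered by inclusion in an interval order. -/
theorem up_chain {P : PreIpomset σ} (hP : P.IsIpomset) (a b : P.carrier) :
    {v | P.lt a v} ⊆ {v | P.lt b v} ∨ {v | P.lt b v} ⊆ {v | P.lt a v} := by
  by_cases h : ∃ v, P.lt a v ∧ ¬ P.lt b v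
  · obtain ⟨v, hv1, hv2⟩ := h
    refine Or.inr (fun v' hv' => ?_)
    rcases hP.interval b v' a v hv' hv1 with h | h
    · exact (hv2 h).elim
    · exact h
  · push_neg at h
    exact Or.inl (fun v hv => h v hv)

/-- If every minimal event is in the source and `P` is not an identity, then `BB P`
is nonempty. -/
theorem BB_nonempty {P : PreIpomset σ} (hP : P.IsIpomset) (hA1 : A1 P = ∅)
    (hid : ¬ (P.S = Set.univ ∧ P.T = Set.univ)) : (BB P).Nonempty := by
  haveI := P.fin
  have hmin : ∀ x, (∀ w, ¬ P.lt w x) → x ∈ P.S := by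
    intro x hx
    by_contra hxS
    exact absurd (Set.eq_empty_iff_forall_notMem.1 hA1 x ⟨hxS, hx⟩) (fun h => h)
  -- every event not in S has a minimal event of S ∖ T strictly below it
  have hbelow : ∀ v, v ∉ P.S → ∃ u₀, u₀ ∈ P.S ∧ u₀ ∉ P.T ∧ P.lt u₀ v := by
    intro v hv
    have : ¬ (∀ w, ¬ P.lt w v) := fun h => hv (hmin v h)
    push_neg at this
    obtain ⟨u, hu⟩ := this
    obtain ⟨u₀, hu₀1, hu₀2⟩ := exists_min_below hP hu
    have hu₀S : u₀ ∈ P.S := hmin u₀ hu₀2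
    have hu₀T : u₀ ∉ P.T := fun hT => hP.tgt_max _ hT _ hu₀1
    exact ⟨u₀, hu₀S, hu₀T, hu₀1⟩
  set C : Set P.carrier := {x | x ∈ P.S ∧ x ∉ P.T} with hC
  by_cases hCne : C.Nonempty
  · -- pick x in C with maximal up-set
    obtain ⟨x, hxC, hxmax⟩ :=
      Set.Finite.exists_maximalFor (fun x => ({v | P.lt x v}).ncard) C (Set.toFinite _) hCne
    refine ⟨x, hxC.1, hxC.2, fun v hv => ?_⟩
    obtain ⟨u₀, h1, h2, h3⟩ := hbelow v hv
    have hup : {w | P.lt u₀ w} ⊆ {w | P.lt x w} := by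
      rcases up_chain hP u₀ x with h | h
      · exact h
      · have hle : ({v | P.lt x v}).ncard ≤ ({v | P.lt u₀ v}).ncard :=
          Set.ncard_le_ncard h (Set.toFinite _)
        have heq := le_antisymm hle (hxmax (j := u₀) ⟨h1, h2⟩ hle)
        exact (Set.eq_of_subset_of_ncard_le h (le_of_eq heq.symm) (Set.toFinite _)).symm.subset
    exact hup h3
  · -- C empty : identity, contradiction
    exfalso
    apply hid
    rw [Set.not_nonempty_iff_eq_empty] at hCne
    have hST : ∀ x, x ∈ P.S → x ∈ P.T := by
      intro x hx
      by_contra hT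
      exact absurd (Set.eq_empty_iff_forall_notMem.1 hCne x ⟨hx, hT⟩) (fun h => h)
    have hSuniv : P.S = Set.univ := by
      rw [Set.eq_univ_iff_forall]
      intro v
      by_contra hv
      obtain ⟨u₀, h1, h2, h3⟩ := hbelow v hv
      exact h2 (hST _ h1)
    refine ⟨hSuniv, Set.eq_univ_iff_forall.2 fun x => ?_⟩
    exact hST x (by rw [hSuniv]; trivial)

end PreIpomset
end HDA

namespace HDA
namespace PreIpomset
variable {σ : Type}

/-! ### Cardinality helpers -/

theorem nat_card_lt_of {α β : Type} [Finite β] (f : α → β) (hf : Function.Injective f)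
    (b : β) (hb : ∀ a, f a ≠ b) : Nat.card α < Nat.card β := by
  classical
  haveI : Finite α := Finite.of_injective f hf
  haveI := Fintype.ofFinite β
  haveI := Fintype.ofFinite α
  rw [Nat.card_eq_fintype_card, Nat.card_eq_fintype_card]
  refine Fintype.card_lt_of_injective_of_notMem f hf (b := b) ?_
  rintro ⟨a, ha⟩
  exact hb a ha

/-- The size measure for the induction. -/
noncomputable def mu (P : PreIpomset σ) : ℕ :=
  Nat.card {x : P.carrier // x ∉ P.S} + Nat.card {x : P.carrier // x ∉ P.T}

/-! ### The left starter peel -/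

/-- `P` with the events of `A1 P` added to the source interface. -/
def spP (P : PreIpomset σ) : PreIpomset σ := P.withIfaces (P.S ∪ A1 P) P.T

/-- The starter `⟨S, S ∪ A1, S ∪ A1⟩`. -/
def spSt (P : PreIpomset σ) : PreIpomset σ := P.sub (P.S ∪ A1 P) P.S Set.univ

theorem spP_isIpomset {P : PreIpomset σ} (hP : P.IsIpomset) : (spP P).IsIpomset := by
  refine ⟨hP.lt_trans, hP.lt_irrefl, hP.evord_acyclic, hP.total, hP.lt_not_evord,
    ?_, hP.tgt_max, hP.interval⟩
  rintro x (hx | hx) y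
  · exact hP.src_min x hx y
  · exact hx.2 y

theorem spSt_discrete (P : PreIpomset σ) {hP : P.IsIpomset} : True := trivial

theorem sp_mem_noLt {P : PreIpomset σ} (hP : P.IsIpomset) :
    ∀ x ∈ P.S ∪ A1 P, ∀ y, ¬ P.lt y x := by
  rintro x (hx | hx) y
  · exact hP.src_min x hx y
  · exact hx.2 y

theorem spSt_isStarter {P : PreIpomset σ} (hP : P.IsIpomset) : IsStarter (spSt P) := by
  refine ⟨sub_isIpomset hP (fun x hxK hxS y hyK => sp_mem_noLt hP x (Or.inl hxS) y)
    (fun x hxK _ y hyK => sp_mem_noLt hP y hyK x), ?_, ?_⟩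
  · exact fun x y h => sp_mem_noLt hP y.val y.prop x.val h
  · exact Set.eq_univ_iff_forall.2 fun x => Set.mem_univ x.val

/-- The matching for the left starter peel. -/
def spMatching (P : PreIpomset σ) : Matching (spSt P) (spP P) where
  g := {
    toFun := fun a => ⟨a.val.val, a.val.prop⟩
    invFun := fun y => ⟨⟨y.val, y.prop⟩, Set.mem_univ _⟩
    left_inv := fun a => rfl
    right_inv := fun y => rfl }
  evord_iff := fun x y => Iff.rfl
  lab_eq := fun x => rfl

theorem sp_glueRel {P : PreIpomset σ} (hP : P.IsIpomset) : GlueRel (spSt P) (spP P) P := by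
  refine ⟨spMatching P, Equiv.ofBijective
    (Sum.elim (fun a => a.val) (fun y => y.val)) ⟨?_, ?_⟩, ?_, ?_, ?_, ?_, ?_⟩
  · rintro (a | y) (b | y') h
    · exact congrArg Sum.inl (Subtype.ext h)
    · exact absurd a.prop (by rw [show a.val = y'.val from h]; exact y'.prop)
    · exact absurd b.prop (by rw [show b.val = y.val from h.symm]; exact y.prop)
    · exact congrArg Sum.inr (Subtype.ext h)
  · intro x
    by_cases hx : x ∈ P.S ∪ A1 P
    · exact ⟨Sum.inl ⟨x, hx⟩, rfl⟩
    · exact ⟨Sum.inr ⟨x, hx⟩, rfl⟩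
  · rintro (a | y) (b | y')
    · rw [glue_lt_inl_inl]
      exact ⟨fun h => h.elim id (fun ⟨_, _, h⟩ => h), Or.inl⟩
    · rw [glue_lt_inl_inr]
      refine ⟨fun h => ?_, fun h => Or.inl ⟨Set.mem_univ _, h⟩⟩
      rcases h with ⟨_, h⟩ | hT
      · exact h
      · exact absurd (Set.mem_univ a.val) hT
    · rw [glue_lt_inr_inl]
      exact ⟨fun ⟨_, h⟩ => h, fun h => ⟨Set.mem_univ _, h⟩⟩
    · exact glue_lt_inr_inr (spMatching P)
  · rintro (a | y) (b | y')
    · rw [glue_evord_inl_inl]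
      exact ⟨fun h => h.elim id (fun ⟨_, _, h⟩ => h), Or.inl⟩
    · rw [glue_evord_inl_inr]
      exact ⟨fun ⟨_, h⟩ => h, fun h => ⟨Set.mem_univ _, h⟩⟩
    · rw [glue_evord_inr_inl]
      exact ⟨fun ⟨_, h⟩ => h, fun h => ⟨Set.mem_univ _, h⟩⟩
    · exact glue_evord_inr_inr (spMatching P)
  · rintro (a | y)
    · erw [glue_S_inl]; exact Iff.rfl
    · exact ⟨fun h => absurd h (glue_S_inr _), fun h => absurd (Or.inl h) y.prop⟩
  · rintro (a | y)
    · erw [glue_T_inl]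
      exact ⟨fun ⟨_, h⟩ => h, fun h => ⟨Set.mem_univ _, h⟩⟩
    · erw [glue_T_inr]; exact Iff.rfl
  · rintro (a | y) <;> rfl

theorem sp_mu_lt {P : PreIpomset σ} (hA : (A1 P).Nonempty) : mu (spP P) < mu P := by
  haveI := P.fin
  obtain ⟨x, hx⟩ := hA
  have h1 : Nat.card {y : (spP P).carrier // y ∉ (spP P).S} <
      Nat.card {y : P.carrier // y ∉ P.S} := by
    refine nat_card_lt_of (fun a => ⟨a.val, fun h => a.prop (Or.inl h)⟩)
      (fun a b h => by
        apply Subtype.ext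
        have h2 := congrArg Subtype.val h
        exact h2) ⟨x, hx.1⟩ ?_
    intro a h
    exact a.prop (by rw [show a.val = x from congrArg Subtype.val h]; exact Or.inr hx)
  have h2 : Nat.card {y : (spP P).carrier // y ∉ (spP P).T} =
      Nat.card {y : P.carrier // y ∉ P.T} := rfl
  unfold mu
  omega

theorem sp_A1_empty (P : PreIpomset σ) : A1 (spP P) = ∅ := by
  rw [Set.eq_empty_iff_forall_notMem]
  rintro x ⟨hxS, hxmin⟩
  exact hxS (Or.inr ⟨fun h => hxS (Or.inl h), hxmin⟩)

theorem sp_AA_subset (P : PreIpomset σ) : AA (spP P) ⊆ AA P := by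
  rintro x ⟨h1, h2, h3⟩
  exact ⟨h1, fun h => h2 (Or.inl h), h3⟩

theorem sp_AA_of_identity {P : PreIpomset σ} (hA : (A1 P).Nonempty)
    (hid : (spP P).T = Set.univ) : (AA P).Nonempty := by
  obtain ⟨x, hx⟩ := hA
  have hT : P.T = Set.univ := hid
  exact ⟨x, by rw [hT]; trivial, hx.1, fun w hw => absurd (by rw [hT]; trivial) hw⟩

end PreIpomset
end HDA

namespace HDA
namespace PreIpomset
variable {σ : Type}

/-! ### The left terminator peel -/

theorem BB_sub_S {P : PreIpomset σ} {x : P.carrier} (h : x ∈ BB P) : x ∈ P.S := h.1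
theorem BB_not_T {P : PreIpomset σ} {x : P.carrier} (h : x ∈ BB P) : x ∉ P.T := h.2.1

/-- `P` with the events of `BB P` removed. -/
def tpP (P : PreIpomset σ) : PreIpomset σ := P.sub (BB P)ᶜ (P.S \ BB P) P.T

/-- The terminator `⟨S, S, S ∖ BB⟩`. -/
def tpTm (P : PreIpomset σ) : PreIpomset σ := P.sub P.S Set.univ (P.S \ BB P)

theorem tpP_isIpomset {P : PreIpomset σ} (hP : P.IsIpomset) : (tpP P).IsIpomset :=
  sub_isIpomset hP (fun x _ hxS y _ => hP.src_min x hxS.1 y)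
    (fun x _ hxT y _ => hP.tgt_max x hxT y)

theorem tpTm_isTerminator {P : PreIpomset σ} (hP : P.IsIpomset) : IsTerminator (tpTm P) := by
  refine ⟨sub_isIpomset hP (fun x hxK _ y _ => hP.src_min x hxK y)
    (fun x hxK _ y hyK => hP.src_min y hyK x), ?_, ?_⟩
  · exact fun x y h => hP.src_min y.val y.prop x.val h
  · exact Set.eq_univ_iff_forall.2 fun x => Set.mem_univ x.val

theorem tpTm_isProperTerminator {P : PreIpomset σ} (hP : P.IsIpomset)
    (hB : (BB P).Nonempty) : IsProperTerminator (tpTm P) := by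
  refine ⟨tpTm_isTerminator hP, ?_⟩
  obtain ⟨b, hb⟩ := hB
  rw [Set.ne_univ_iff_exists_notMem]
  exact ⟨⟨b, hb.1⟩, fun h => h.2 hb⟩

/-- The matching for the left terminator peel. -/
def tpMatching (P : PreIpomset σ) : Matching (tpTm P) (tpP P) where
  g := {
    toFun := fun a => ⟨⟨a.val.val, fun h => a.prop.2 h⟩, a.prop⟩
    invFun := fun y => ⟨⟨y.val.val, y.prop.1⟩, y.prop⟩
    left_inv := fun a => rfl
    right_inv := fun y => rfl }
  evord_iff := fun x y => Iff.rfl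
  lab_eq := fun x => rfl

theorem tp_inr_not_S {P : PreIpomset σ} (y : {y : (tpP P).carrier // y ∉ (tpP P).S}) :
    y.val.val ∉ P.S := by
  intro h
  exact y.prop ⟨h, y.val.prop⟩

theorem tp_glueRel {P : PreIpomset σ} (hP : P.IsIpomset) : GlueRel (tpTm P) (tpP P) P := by
  refine ⟨tpMatching P, Equiv.ofBijective
    (Sum.elim (fun a => a.val) (fun y => y.val.val)) ⟨?_, ?_⟩, ?_, ?_, ?_, ?_, ?_⟩
  · rintro (a | y) (b | y') h
    · exact congrArg Sum.inl (Subtype.ext h)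
    · exact absurd a.prop (by rw [show a.val = y'.val.val from h]; exact tp_inr_not_S y')
    · exact absurd b.prop (by rw [show b.val = y.val.val from h.symm]; exact tp_inr_not_S y)
    · exact congrArg Sum.inr (Subtype.ext (Subtype.ext h))
  · intro x
    by_cases hx : x ∈ P.S
    · exact ⟨Sum.inl ⟨x, hx⟩, rfl⟩
    · exact ⟨Sum.inr ⟨⟨x, fun hB => hx hB.1⟩, fun hS => hx hS.1⟩, rfl⟩
  · rintro (a | y) (b | y')
    · rw [glue_lt_inl_inl]
      exact ⟨fun h => h.elim id (fun ⟨_, _, h⟩ => h), Or.inl⟩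
    · rw [glue_lt_inl_inr]
      constructor
      · rintro (⟨ha, h⟩ | hT)
        · exact h
        · have haB : a.val ∈ BB P := by
            by_contra hc
            exact hT ⟨a.prop, hc⟩
          exact haB.2.2 _ (tp_inr_not_S y')
      · intro h
        by_cases ha : a.val ∈ P.S \ BB P
        · exact Or.inl ⟨ha, h⟩
        · exact Or.inr ha
    · rw [glue_lt_inr_inl]
      exact ⟨fun ⟨_, h⟩ => h, fun h => (hP.src_min _ b.prop _ h).elim⟩
    · exact glue_lt_inr_inr (tpMatching P)
  · rintro (a | y) (b | y')
    · rw [glue_evord_inl_inl]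
      exact ⟨fun h => h.elim id (fun ⟨_, _, h⟩ => h), Or.inl⟩
    · rw [glue_evord_inl_inr]
      constructor
      · rintro ⟨ha, h⟩; exact h
      · intro h
        refine ⟨⟨a.prop, fun haB => ?_⟩, h⟩
        exact (hP.lt_not_evord _ _ (haB.2.2 _ (tp_inr_not_S y'))).1 h
    · rw [glue_evord_inr_inl]
      constructor
      · rintro ⟨hb, h⟩; exact h
      · intro h
        refine ⟨⟨b.prop, fun hbB => ?_⟩, h⟩
        exact (hP.lt_not_evord _ _ (hbB.2.2 _ (tp_inr_not_S y))).2 h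
    · exact glue_evord_inr_inr (tpMatching P)
  · rintro (a | y)
    · erw [glue_S_inl]
      exact ⟨fun _ => a.prop, fun _ => Set.mem_univ _⟩
    · exact ⟨fun h => absurd h (glue_S_inr _), fun h => absurd h (tp_inr_not_S y)⟩
  · rintro (a | y)
    · erw [glue_T_inl]
      constructor
      · rintro ⟨ha, h⟩; exact h
      · intro h
        exact ⟨⟨a.prop, fun haB => haB.2.1 h⟩, h⟩
    · erw [glue_T_inr]; exact Iff.rfl
  · rintro (a | y) <;> rfl

theorem tp_mu_lt {P : PreIpomset σ} (hB : (BB P).Nonempty) : mu (tpP P) < mu P := by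
  haveI := P.fin
  obtain ⟨b, hb⟩ := hB
  have h1 : Nat.card {y : (tpP P).carrier // y ∉ (tpP P).S} ≤
      Nat.card {y : P.carrier // y ∉ P.S} := by
    refine Nat.card_le_card_of_injective (fun a => ⟨a.val.val, fun h => a.prop ⟨h, a.val.prop⟩⟩) ?_
    intro a b h
    apply Subtype.ext; apply Subtype.ext
    have h2 := congrArg Subtype.val h
    exact h2
  have h2 : Nat.card {y : (tpP P).carrier // y ∉ (tpP P).T} <
      Nat.card {y : P.carrier // y ∉ P.T} := by
    refine nat_card_lt_of (fun a => ⟨a.val.val, a.prop⟩)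
      (fun a b h => by
        apply Subtype.ext; apply Subtype.ext
        have h2 := congrArg Subtype.val h
        exact h2) ⟨b, hb.2.1⟩ ?_
    intro a h
    have := congrArg Subtype.val h
    exact a.val.prop (by rw [show a.val.val = b from this]; exact hb)
  unfold mu
  omega

theorem tp_AA_nonempty_iff {P : PreIpomset σ} (hP : P.IsIpomset) :
    (AA (tpP P)).Nonempty ↔ (AA P).Nonempty := by
  constructor
  · rintro ⟨x, h1, h2, h3⟩
    have hxS : x.val ∉ P.S := by
      intro hS
      have hxB : x.val ∉ BB P := fun hB => hB.2.1 h1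
      exact h2 ⟨hS, hxB⟩
    refine ⟨x.val, h1, hxS, fun w hw => ?_⟩
    by_cases hwB : w ∈ BB P
    · exact hwB.2.2 _ hxS
    · exact h3 ⟨w, hwB⟩ hw
  · rintro ⟨x, h1, h2, h3⟩
    have hxB : x ∉ BB P := fun hB => hB.2.1 h1
    refine ⟨⟨x, hxB⟩, h1, fun hS => h2 hS.1, fun w hw => h3 w.val hw⟩

theorem tp_BB_empty {P : PreIpomset σ} (hP : P.IsIpomset) : BB (tpP P) = ∅ := by
  rw [Set.eq_empty_iff_forall_notMem]
  rintro x ⟨h1, h2, h3⟩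
  refine h1.2 ⟨h1.1, h2, fun v hv => ?_⟩
  have hvB : v ∉ BB P := fun hB => hv hB.1
  exact h3 ⟨v, hvB⟩ (fun hS => hv hS.1)

end PreIpomset
end HDA

namespace HDA
namespace PreIpomset
variable {σ : Type}

theorem spSt_isProperStarter {P : PreIpomset σ} (hP : P.IsIpomset)
    (hA : (A1 P).Nonempty) : IsProperStarter (spSt P) := by
  refine ⟨spSt_isStarter hP, ?_⟩
  obtain ⟨x, hx⟩ := hA
  rw [Set.ne_univ_iff_exists_notMem]
  exact ⟨⟨x, Or.inr hx⟩, fun h => hx.1 h⟩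

/-- The specification of the sparse step decomposition produced in the induction. -/
def DecompSpec (P : PreIpomset σ) : Prop :=
  ∃ l, IsSparseDecomp l P ∧
    (∀ Q, l.getLast? = some Q → IsProperStarter Q → (AA P).Nonempty) ∧
    (∀ H, l.head? = some H → IsProperTerminator H → (BB P).Nonempty) ∧
    (∀ H, l.head? = some H → IsProperStarter H → BB P = ∅)

theorem decomp_step (P : PreIpomset σ) (hP : P.IsIpomset)
    (IH : ∀ P' : PreIpomset σ, mu P' < mu P → P'.IsIpomset → DecompSpec P') :
    DecompSpec P := by
  by_cases hid : P.S = Set.univ ∧ P.T = Set.univ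
  · -- identity case
    have hD : P.Discrete := fun x y h => hP.tgt_max x (Set.eq_univ_iff_forall.1 hid.2 x) y h
    refine ⟨[P], ⟨GluesTo.single (iso_refl P), Or.inl ⟨P, rfl, hP, hD, hid.1, hid.2⟩⟩,
      ?_, ?_, ?_⟩
    · intro Q hQ hPS
      simp only [List.getLast?_singleton, Option.some.injEq] at hQ
      subst hQ
      exact (hPS.2 hid.1).elim
    · intro H hH hPT
      simp only [List.head?_cons, Option.some.injEq] at hH
      subst hH
      exact (hPT.2 hid.2).elim
    · intro H hH hPS
      simp only [List.head?_cons, Option.some.injEq] at hH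
      subst hH
      exact (hPS.2 hid.1).elim
  · by_cases hB : (BB P).Nonempty
    · -- peel a terminator on the left
      have hg := tp_glueRel hP
      have hP' := tpP_isIpomset hP
      have hTm := tpTm_isProperTerminator hP hB
      obtain ⟨l'', ⟨hglue'', hdis⟩, hlastspec, hheadT, hheadS⟩ :=
        IH (tpP P) (tp_mu_lt hB) hP'
      have hTmT : ¬ IsProperStarter (tpTm P) := by
        rintro ⟨⟨_, _, hT⟩, _⟩
        obtain ⟨b, hb⟩ := hB
        have : (⟨b, hb.1⟩ : (tpTm P).carrier) ∈ (tpTm P).T := by rw [hT]; trivial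
        exact this.2 hb
      rcases hdis with ⟨I, rfl, hI⟩ | ⟨hprop, halt⟩
      · -- tpP P is an identity
        cases hglue'' with
        | single hiso =>
            obtain ⟨hS', hT', hD'⟩ := identity_of_iso hiso hI.2.2.1 hI.2.2.2 hI.2.1
            obtain ⟨m, hm⟩ := hg
            have hTmP : Iso (tpTm P) P :=
              iso_trans (iso_symm (glue_right_unit m hS' hT' hD')) hm
            refine ⟨[tpTm P], ⟨GluesTo.single hTmP, Or.inr ⟨?_, List.isChain_singleton _⟩⟩,
              ?_, ?_, ?_⟩
            · intro Q hQ
              rw [List.mem_singleton] at hQ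
              subst hQ
              exact Or.inr hTm
            · intro Q hQ hPS
              simp only [List.getLast?_singleton, Option.some.injEq] at hQ
              subst hQ
              exact (hTmT hPS).elim
            · intro H hH hPT
              exact hB
            · intro H hH hPS
              simp only [List.head?_cons, Option.some.injEq] at hH
              subst hH
              exact (hTmT hPS).elim
        | cons hg' _ => cases hg'
      · -- general case
        have hBl : BB (tpP P) = ∅ := tp_BB_empty hP
        cases l'' with
        | nil => cases hglue''
        | cons H t =>
            have hHps : IsProperStarter H := by
              rcases hprop H (List.mem_cons_self) with h | h
              · exact h
              · have := hheadT H rfl h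
                rw [hBl] at this
                exact absurd this Set.not_nonempty_empty
            refine ⟨tpTm P :: H :: t, ⟨GluesTo.cons hglue'' hg, Or.inr ⟨?_, ?_⟩⟩,
              ?_, ?_, ?_⟩
            · intro Q hQ
              rcases List.mem_cons.1 hQ with rfl | h
              · exact Or.inr hTm
              · exact hprop Q h
            · exact List.isChain_cons_cons.2 ⟨Or.inr ⟨hTm, hHps⟩, halt⟩
            · intro Q hQ hPS
              rw [List.getLast?_cons_cons] at hQ
              exact (tp_AA_nonempty_iff hP).1 (hlastspec Q hQ hPS)
            · intro _ _ _
              exact hB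
            · intro H' hH' hPS
              simp only [List.head?_cons, Option.some.injEq] at hH'
              subst hH'
              exact (hTmT hPS).elim
    · -- peel a starter on the left
      have hA : (A1 P).Nonempty := by
        by_contra hA
        rw [Set.not_nonempty_iff_eq_empty] at hA
        exact hB (BB_nonempty hP hA hid)
      have hg := sp_glueRel hP
      have hP' := spP_isIpomset hP
      have hSt := spSt_isProperStarter hP hA
      have hBempty : BB P = ∅ := Set.not_nonempty_iff_eq_empty.1 hB
      have hStT : ¬ IsProperTerminator (spSt P) := fun h => h.2 (spSt_isStarter hP).2.2
      by_cases hid' : (spP P).S = Set.univ ∧ (spP P).T = Set.univ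
      · -- spP P is an identity
        have hD' : (spP P).Discrete := fun x y h =>
          hP'.tgt_max x (Set.eq_univ_iff_forall.1 hid'.2 x) y h
        obtain ⟨m, hm⟩ := hg
        have hStP : Iso (spSt P) P :=
          iso_trans (iso_symm (glue_right_unit m hid'.1 hid'.2 hD')) hm
        refine ⟨[spSt P], ⟨GluesTo.single hStP, Or.inr ⟨?_, List.isChain_singleton _⟩⟩,
          ?_, ?_, ?_⟩
        · intro Q hQ
          rw [List.mem_singleton] at hQ
          subst hQ
          exact Or.inl hSt
        · intro Q hQ hPS
          exact sp_AA_of_identity hA hid'.2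
        · intro H hH hPT
          simp only [List.head?_cons, Option.some.injEq] at hH
          subst hH
          exact (hStT hPT).elim
        · intro H hH hPS
          exact hBempty
      · obtain ⟨l'', ⟨hglue'', hdis⟩, hlastspec, hheadT, hheadS⟩ :=
          IH (spP P) (sp_mu_lt hA) hP'
        rcases hdis with ⟨I, rfl, hI⟩ | ⟨hprop, halt⟩
        · -- impossible : spP P would be an identity
          cases hglue'' with
          | single hiso =>
              obtain ⟨hS', hT', _⟩ := identity_of_iso hiso hI.2.2.1 hI.2.2.2 hI.2.1
              exact (hid' ⟨hS', hT'⟩).elim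
          | cons hg' _ => cases hg'
        · have hBl' : (BB (spP P)).Nonempty :=
            BB_nonempty hP' (sp_A1_empty P) hid'
          cases l'' with
          | nil => cases hglue''
          | cons H t =>
              have hHpt : IsProperTerminator H := by
                rcases hprop H (List.mem_cons_self) with h | h
                · have := hheadS H rfl h
                  rw [this] at hBl'
                  exact absurd hBl' Set.not_nonempty_empty
                · exact h
              refine ⟨spSt P :: H :: t, ⟨GluesTo.cons hglue'' hg, Or.inr ⟨?_, ?_⟩⟩,
                ?_, ?_, ?_⟩
              · intro Q hQ
                rcases List.mem_cons.1 hQ with rfl | h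
                · exact Or.inl hSt
                · exact hprop Q h
              · exact List.isChain_cons_cons.2 ⟨Or.inl ⟨hSt, hHpt⟩, halt⟩
              · intro Q hQ hPS
                rw [List.getLast?_cons_cons] at hQ
                exact Set.Nonempty.mono (sp_AA_subset P) (hlastspec Q hQ hPS)
              · intro H' hH' hPT
                simp only [List.head?_cons, Option.some.injEq] at hH'
                subst hH'
                exact (hStT hPT).elim
              · intro H' hH' hPS
                exact hBempty

theorem exists_decomp (P : PreIpomset σ) (hP : P.IsIpomset) : DecompSpec P := by
  suffices h : ∀ n (P : PreIpomset σ), mu P ≤ n → P.IsIpomset → DecompSpec P from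
    h (mu P) P le_rfl hP
  intro n
  induction n with
  | zero =>
      intro P hn hP
      exact decomp_step P hP (fun P' hlt _ => absurd hlt (by omega))
  | succ n ih =>
      intro P hn hP
      exact decomp_step P hP (fun P' hlt hP' => ih P' (by omega) hP')

end PreIpomset
end HDA

namespace HDA
namespace PreIpomset
variable {σ : Type}

/-! ### The right starter peel -/

theorem AA_sub_T {P : PreIpomset σ} {x : P.carrier} (h : x ∈ AA P) : x ∈ P.T := h.1
theorem AA_not_S {P : PreIpomset σ} {x : P.carrier} (h : x ∈ AA P) : x ∉ P.S := h.2.1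

/-- `P` with the events of `AA P` removed. -/
def rsP (P : PreIpomset σ) : PreIpomset σ := P.sub (AA P)ᶜ P.S (P.T \ AA P)

/-- The starter `⟨T ∖ AA, T, T⟩`. -/
def rsSt (P : PreIpomset σ) : PreIpomset σ := P.sub P.T (P.T \ AA P) Set.univ

theorem rsP_isIpomset {P : PreIpomset σ} (hP : P.IsIpomset) : (rsP P).IsIpomset :=
  sub_isIpomset hP (fun x _ hxS y _ => hP.src_min x hxS y)
    (fun x _ hxT y _ => hP.tgt_max x hxT.1 y)

theorem rsSt_isStarter {P : PreIpomset σ} (hP : P.IsIpomset) : IsStarter (rsSt P) := by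
  refine ⟨sub_isIpomset hP (fun x hxK _ y hyK => hP.tgt_max y hyK x)
    (fun x hxK _ y _ => hP.tgt_max x hxK y), ?_, ?_⟩
  · exact fun x y h => hP.tgt_max x.val x.prop y.val h
  · exact Set.eq_univ_iff_forall.2 fun x => Set.mem_univ x.val

/-- The matching for the right starter peel. -/
def rsMatching (P : PreIpomset σ) : Matching (rsP P) (rsSt P) where
  g := {
    toFun := fun a => ⟨⟨a.val.val, a.prop.1⟩, a.prop⟩
    invFun := fun y => ⟨⟨y.val.val, fun h => y.prop.2 h⟩, y.prop⟩
    left_inv := fun a => rfl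
    right_inv := fun y => rfl }
  evord_iff := fun x y => Iff.rfl
  lab_eq := fun x => rfl

theorem rs_inr_AA {P : PreIpomset σ} (y : {y : (rsSt P).carrier // y ∉ (rsSt P).S}) :
    y.val.val ∈ AA P := by
  by_contra h
  exact y.prop ⟨y.val.prop, h⟩

theorem rs_glueRel {P : PreIpomset σ} (hP : P.IsIpomset) : GlueRel (rsP P) (rsSt P) P := by
  refine ⟨rsMatching P, Equiv.ofBijective
    (Sum.elim (fun a => a.val) (fun y => y.val.val)) ⟨?_, ?_⟩, ?_, ?_, ?_, ?_, ?_⟩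
  · rintro (a | y) (b | y') h
    · exact congrArg Sum.inl (Subtype.ext h)
    · exact absurd (rs_inr_AA y') (by rw [← show a.val = y'.val.val from h]; exact a.prop)
    · exact absurd (rs_inr_AA y) (by rw [← show b.val = y.val.val from h.symm]; exact b.prop)
    · exact congrArg Sum.inr (Subtype.ext (Subtype.ext h))
  · intro x
    by_cases hx : x ∈ AA P
    · exact ⟨Sum.inr ⟨⟨x, hx.1⟩, fun h => h.2 hx⟩, rfl⟩
    · exact ⟨Sum.inl ⟨x, hx⟩, rfl⟩
  · rintro (a | y) (b | y')
    · rw [glue_lt_inl_inl]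
      exact ⟨fun h => h.elim id (fun ⟨_, _, h⟩ => h), Or.inl⟩
    · rw [glue_lt_inl_inr]
      constructor
      · rintro (⟨ha, h⟩ | hT)
        · exact h
        · have haT : a.val ∉ P.T := fun h => hT ⟨h, a.prop⟩
          exact (rs_inr_AA y').2.2 a.val haT
      · intro h
        by_cases ha : a.val ∈ P.T \ AA P
        · exact Or.inl ⟨ha, h⟩
        · exact Or.inr ha
    · rw [glue_lt_inr_inl]
      refine ⟨fun ⟨_, h⟩ => h, fun h => ?_⟩
      exact (hP.tgt_max _ (rs_inr_AA y).1 _ h).elim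
    · exact glue_lt_inr_inr (rsMatching P)
  · rintro (a | y) (b | y')
    · rw [glue_evord_inl_inl]
      exact ⟨fun h => h.elim id (fun ⟨_, _, h⟩ => h), Or.inl⟩
    · rw [glue_evord_inl_inr]
      constructor
      · rintro ⟨ha, h⟩; exact h
      · intro h
        have haT : a.val ∈ P.T := by
          by_contra hc
          exact (hP.lt_not_evord _ _ ((rs_inr_AA y').2.2 a.val hc)).1 h
        exact ⟨⟨haT, a.prop⟩, h⟩
    · rw [glue_evord_inr_inl]
      constructor
      · rintro ⟨hb, h⟩; exact h
      · intro h
        have hbT : b.val ∈ P.T := by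
          by_contra hc
          exact (hP.lt_not_evord _ _ ((rs_inr_AA y).2.2 b.val hc)).2 h
        exact ⟨⟨hbT, b.prop⟩, h⟩
    · exact glue_evord_inr_inr (rsMatching P)
  · rintro (a | y)
    · erw [glue_S_inl]; exact Iff.rfl
    · exact ⟨fun h => absurd h (glue_S_inr _), fun h => absurd h (rs_inr_AA y).2.1⟩
  · rintro (a | y)
    · erw [glue_T_inl]
      exact ⟨fun ⟨ha, _⟩ => ha.1, fun h => ⟨⟨h, a.prop⟩, Set.mem_univ _⟩⟩
    · erw [glue_T_inr]
      exact ⟨fun _ => (rs_inr_AA y).1, fun _ => Set.mem_univ _⟩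
  · rintro (a | y) <;> rfl

theorem rs_AA_empty {P : PreIpomset σ} (hP : P.IsIpomset) : AA (rsP P) = ∅ := by
  rw [Set.eq_empty_iff_forall_notMem]
  rintro x ⟨h1, h2, h3⟩
  refine x.prop ⟨h1.1, h2, fun w hw => ?_⟩
  have hwA : w ∉ AA P := fun hA => hw hA.1
  exact h3 ⟨w, hwA⟩ (fun hT => hw hT.1)

theorem rsP_inQ {P : PreIpomset σ} (hP : P.IsIpomset) : InQ (rsP P) := by
  obtain ⟨l, hsd, hlast, -, -⟩ := exists_decomp (rsP P) (rsP_isIpomset hP)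
  refine ⟨l, hsd, fun Q hQ hPS => ?_⟩
  have := hlast Q hQ hPS
  rw [rs_AA_empty hP] at this
  exact absurd this Set.not_nonempty_empty

theorem rs_tgtIface_iso (P : PreIpomset σ) : Iso P.tgtIface (rsSt P).conclistOf :=
  ⟨Equiv.refl _, fun _ _ => Iff.rfl, fun _ _ => Iff.rfl, fun _ => Iff.rfl, fun _ => Iff.rfl,
    fun _ => rfl⟩

end PreIpomset
end HDA

namespace HDA
namespace PreIpomset
variable {σ : Type}

/-- The canonical preimage in the gluing of an event of the second factor. -/
noncomputable def stPre {P'' St'' : PreIpomset σ} (m : Matching P'' St'')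
    (y : St''.carrier) : (glue P'' St'' m).carrier :=
  if hy : y ∈ St''.S then Sum.inl (m.g.symm ⟨y, hy⟩).val else Sum.inr ⟨y, hy⟩

theorem stPre_glueQOf {P'' St'' : PreIpomset σ} (m : Matching P'' St'')
    (y : St''.carrier) : glueQOf P'' St'' m (stPre m y) = some y := by
  unfold stPre
  by_cases hy : y ∈ St''.S
  · erw [dif_pos hy, glueQOf_inl_pos m (m.g.symm ⟨y, hy⟩).prop]
    congr 1
    rw [show (⟨(m.g.symm ⟨y, hy⟩).val, (m.g.symm ⟨y, hy⟩).prop⟩ : {x // x ∈ P''.T}) =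
      m.g.symm ⟨y, hy⟩ from Subtype.ext rfl, m.g.apply_symm_apply]
  · erw [dif_neg hy]
    rfl

theorem stPre_inl {P'' St'' : PreIpomset σ} (m : Matching P'' St'')
    {y : St''.carrier} (hy : y ∈ St''.S) :
    stPre m y = Sum.inl (m.g.symm ⟨y, hy⟩).val := dif_pos hy

theorem stPre_inr {P'' St'' : PreIpomset σ} (m : Matching P'' St'')
    {y : St''.carrier} (hy : y ∉ St''.S) :
    stPre m y = Sum.inr ⟨y, hy⟩ := dif_neg hy

theorem glueQOf_fiber_unique {P'' St'' : PreIpomset σ} (m : Matching P'' St'')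
    {u u' : (glue P'' St'' m).carrier} {y : St''.carrier}
    (h : glueQOf P'' St'' m u = some y) (h' : glueQOf P'' St'' m u' = some y) :
    u = u' := by
  rcases u with a | z <;> rcases u' with a' | z'
  · by_cases ha : a ∈ P''.T
    · by_cases ha' : a' ∈ P''.T
      · rw [glueQOf_inl_pos m ha] at h
        rw [glueQOf_inl_pos m ha'] at h'
        have : m.g ⟨a, ha⟩ = m.g ⟨a', ha'⟩ :=
          Subtype.ext ((Option.some.inj h).trans (Option.some.inj h').symm)
        have := m.g.injective this
        exact congrArg Sum.inl (congrArg Subtype.val this)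
      · rw [glueQOf_inl_neg m ha'] at h'; cases h'
    · rw [glueQOf_inl_neg m ha] at h; cases h
  · by_cases ha : a ∈ P''.T
    · rw [glueQOf_inl_pos m ha] at h
      rw [glueQOf_inr] at h'
      exfalso
      apply z'.prop
      have e1 : z'.val = y := Option.some.inj h'
      have e2 : (m.g ⟨a, ha⟩).val = y := Option.some.inj h
      rw [e1, ← e2]
      exact (m.g ⟨a, ha⟩).prop
    · rw [glueQOf_inl_neg m ha] at h; cases h
  · by_cases ha' : a' ∈ P''.T
    · rw [glueQOf_inl_pos m ha'] at h'
      rw [glueQOf_inr] at h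
      exfalso
      apply z.prop
      have e1 : z.val = y := Option.some.inj h
      have e2 : (m.g ⟨a', ha'⟩).val = y := Option.some.inj h'
      rw [e1, ← e2]
      exact (m.g ⟨a', ha'⟩).prop
    · rw [glueQOf_inl_neg m ha'] at h'; cases h'
  · rw [glueQOf_inr] at h h'
    exact congrArg Sum.inr (Subtype.ext ((Option.some.inj h).trans (Option.some.inj h').symm))

theorem presentation_unique {P P'' St'' : PreIpomset σ} (hP : P.IsIpomset)
    (hP'' : P''.IsIpomset) (hSt : IsStarter St'') (hGQ : GoodQ P'')
    (m : Matching P'' St'') (hiso : Iso (glue P'' St'' m) P) :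
    Iso P'' (rsP P) ∧ Iso St'' (rsSt P) := by
  obtain ⟨f, hlt, hev, hS, hT, hlab⟩ := hiso
  have hStD : St''.Discrete := hSt.2.1
  have hStT : St''.T = Set.univ := hSt.2.2
  have key1 : ∀ a : P''.carrier, Sum.inl a ∈ (glue P'' St'' m).T ↔ a ∈ P''.T := by
    intro a
    rw [glue_T_inl]
    exact ⟨fun ⟨h, _⟩ => h, fun h => ⟨h, by rw [hStT]; trivial⟩⟩
  have key2 : ∀ y, Sum.inr y ∈ (glue P'' St'' m).T := by
    intro y
    rw [glue_T_inr, hStT]; trivial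
  have key3 : ∀ a b : P''.carrier,
      (glue P'' St'' m).lt (Sum.inl a) (Sum.inl b) ↔ P''.lt a b := by
    intro a b
    rw [glue_lt_inl_inl]
    exact ⟨fun h => h.elim id (fun ⟨_, _, h⟩ => (hStD _ _ h).elim), Or.inl⟩
  have key4 : ∀ a b : P''.carrier,
      (glue P'' St'' m).evord (Sum.inl a) (Sum.inl b) ↔ P''.evord a b := by
    intro a b
    rw [glue_evord_inl_inl]
    exact ⟨fun h => h.elim id (fun ⟨ha, hb, h⟩ => (m.evord_iff ⟨a, ha⟩ ⟨b, hb⟩).2 h), Or.inl⟩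
  -- Claim A : events coming from the second factor are exactly `AA P`
  have claimA : ∀ x : P.carrier, (∃ y, f.symm x = Sum.inr y) ↔ x ∈ AA P := by
    intro x
    constructor
    · rintro ⟨y, hy⟩
      have hfx : f (Sum.inr y) = x := by rw [← hy, f.apply_symm_apply]
      refine ⟨?_, ?_, ?_⟩
      · rw [← hfx]
        exact (hT (Sum.inr y)).1 (key2 y)
      · rw [← hfx]
        intro hc
        exact glue_S_inr m ((hS (Sum.inr y)).2 hc)
      · intro w hw
        rcases hu : f.symm w with a | y'
        · have ha : a ∉ P''.T := by
            intro hc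
            apply hw
            have hfa : f (Sum.inl a) = w := by rw [← hu, f.apply_symm_apply]
            rw [← hfa]
            exact (hT (Sum.inl a)).1 ((key1 a).2 hc)
          have hglt : (glue P'' St'' m).lt (Sum.inl a) (Sum.inr y) :=
            (glue_lt_inl_inr m).2 (Or.inr ha)
          have hres := (hlt _ _).1 hglt
          rwa [show f (Sum.inl a) = w by rw [← hu, f.apply_symm_apply], hfx] at hres
        · exfalso
          apply hw
          have hfy : f (Sum.inr y') = w := by rw [← hu, f.apply_symm_apply]
          rw [← hfy]
          exact (hT (Sum.inr y')).1 (key2 y')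
    · intro hx
      rcases hu : f.symm x with a | y
      · exfalso
        have hfx : f (Sum.inl a) = x := by rw [← hu, f.apply_symm_apply]
        have haT : a ∈ P''.T := by
          erw [← key1 a, hT (Sum.inl a), hfx]
          exact hx.1
        have haS : a ∉ P''.S := by
          intro hc
          apply hx.2.1
          rw [← hfx]
          exact (hS (Sum.inl a)).1 ((glue_S_inl m).2 hc)
        have hall : ∀ w', w' ∉ P''.T → P''.lt w' a := by
          intro w' hw'
          have h1 : f (Sum.inl w') ∉ P.T := by
            intro hc
            exact hw' ((key1 w').1 ((hT (Sum.inl w')).2 hc))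
          have h2 : P.lt (f (Sum.inl w')) x := hx.2.2 _ h1
          have h3 : (glue P'' St'' m).lt (Sum.inl w') (Sum.inl a) := by
            rw [hlt (Sum.inl w') (Sum.inl a), hfx]
            exact h2
          exact (key3 _ _).1 h3
        obtain ⟨w, hwT, hwlt⟩ := hGQ a haT haS
        exact hwlt (hall w hwT)
      · exact ⟨y, by first | rfl | rw [hu]⟩
  have hnotAA : ∀ a : P''.carrier, f (Sum.inl a) ∉ AA P := by
    intro a hA
    obtain ⟨y, hy⟩ := (claimA _).2 hA
    erw [f.symm_apply_apply] at hy
    cases hy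
  have hinAA : ∀ z, f (Sum.inr z) ∈ AA P := by
    intro z
    exact (claimA _).1 ⟨z, by erw [f.symm_apply_apply]⟩
  constructor
  · -- the isomorphism of the first factors
    refine ⟨Equiv.ofBijective (fun a => ⟨f (Sum.inl a), hnotAA a⟩) ⟨?_, ?_⟩,
      ?_, ?_, ?_, ?_, ?_⟩
    · intro a b h
      exact Sum.inl.inj (f.injective (congrArg Subtype.val h))
    · rintro ⟨x, hx⟩
      rcases hu : f.symm x with a | y
      · refine ⟨a, Subtype.ext ?_⟩
        show f (Sum.inl a) = x
        rw [← hu, f.apply_symm_apply]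
      · exact absurd ((claimA x).1 ⟨y, by first | rfl | rw [hu]⟩) hx
    · intro a b
      show P''.lt a b ↔ P.lt (f (Sum.inl a)) (f (Sum.inl b))
      rw [← hlt (Sum.inl a) (Sum.inl b), key3]
    · intro a b
      show P''.evord a b ↔ P.evord (f (Sum.inl a)) (f (Sum.inl b))
      rw [← hev (Sum.inl a) (Sum.inl b), key4]
    · intro a
      show a ∈ P''.S ↔ f (Sum.inl a) ∈ P.S
      erw [← hS (Sum.inl a), glue_S_inl]
    · intro a
      show a ∈ P''.T ↔ f (Sum.inl a) ∈ P.T \ AA P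
      constructor
      · intro h
        exact ⟨(hT (Sum.inl a)).1 ((key1 a).2 h), hnotAA a⟩
      · rintro ⟨h, -⟩
        exact (key1 a).1 ((hT (Sum.inl a)).2 h)
    · intro a
      exact hlab (Sum.inl a)
  · -- the isomorphism of the second factors
    have hpreT : ∀ y : St''.carrier, f (stPre m y) ∈ P.T := by
      intro y
      apply (hT (stPre m y)).1
      exact ⟨y, stPre_glueQOf m y, by rw [hStT]; trivial⟩
    have main_ev : ∀ (u v : (glue P'' St'' m).carrier) (y y' : St''.carrier),
        glueQOf P'' St'' m u = some y → glueQOf P'' St'' m v = some y' →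
        ((glue P'' St'' m).evord u v ↔ St''.evord y y') := by
      rintro (a | z) (b | z') y y' hu hv
      · by_cases ha : a ∈ P''.T
        · by_cases hb : b ∈ P''.T
          · rw [glueQOf_inl_pos m ha] at hu
            rw [glueQOf_inl_pos m hb] at hv
            cases Option.some.inj hu
            cases Option.some.inj hv
            rw [key4 a b]
            exact (m.evord_iff ⟨a, ha⟩ ⟨b, hb⟩)
          · rw [glueQOf_inl_neg m hb] at hv; cases hv
        · rw [glueQOf_inl_neg m ha] at hu; cases hu
      · by_cases ha : a ∈ P''.T
        · rw [glueQOf_inl_pos m ha] at hu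
          rw [glueQOf_inr] at hv
          cases Option.some.inj hu
          cases Option.some.inj hv
          rw [glue_evord_inl_inr]
          exact ⟨fun ⟨_, h⟩ => h, fun h => ⟨ha, h⟩⟩
        · rw [glueQOf_inl_neg m ha] at hu; cases hu
      · by_cases hb : b ∈ P''.T
        · rw [glueQOf_inl_pos m hb] at hv
          rw [glueQOf_inr] at hu
          cases Option.some.inj hu
          cases Option.some.inj hv
          rw [glue_evord_inr_inl]
          exact ⟨fun ⟨_, h⟩ => h, fun h => ⟨hb, h⟩⟩
        · rw [glueQOf_inl_neg m hb] at hv; cases hv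
      · rw [glueQOf_inr] at hu hv
        cases Option.some.inj hu
        cases Option.some.inj hv
        rw [glue_evord_inr_inr]
    have main_lt : ∀ (u v : (glue P'' St'' m).carrier) (y y' : St''.carrier),
        glueQOf P'' St'' m u = some y → glueQOf P'' St'' m v = some y' →
        ¬ (glue P'' St'' m).lt u v := by
      rintro (a | z) (b | z') y y' hu hv hltc
      · have ha : a ∈ P''.T := by
          by_contra hc
          rw [glueQOf_inl_neg m hc] at hu; cases hu
        exact hP''.tgt_max a ha b ((key3 a b).1 hltc)
      · rw [glue_lt_inl_inr] at hltc
        rcases hltc with ⟨_, h⟩ | ha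
        · exact hStD _ _ h
        · rw [glueQOf_inl_neg m ha] at hu; cases hu
      · rw [glue_lt_inr_inl] at hltc
        obtain ⟨_, h⟩ := hltc
        exact hStD _ _ h
      · rw [glue_lt_inr_inr] at hltc
        exact hStD _ _ hltc
    have main_lab : ∀ (u : (glue P'' St'' m).carrier) (y : St''.carrier),
        glueQOf P'' St'' m u = some y → (glue P'' St'' m).lab u = St''.lab y := by
      rintro (a | z) y hu
      · have ha : a ∈ P''.T := by
          by_contra hc
          rw [glueQOf_inl_neg m hc] at hu; cases hu
        rw [glueQOf_inl_pos m ha] at hu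
        cases Option.some.inj hu
        exact (m.lab_eq ⟨a, ha⟩).symm
      · rw [glueQOf_inr] at hu
        cases Option.some.inj hu
        rfl
    refine ⟨Equiv.ofBijective (fun y => ⟨f (stPre m y), hpreT y⟩) ⟨?_, ?_⟩,
      ?_, ?_, ?_, ?_, ?_⟩
    · intro y y' h
      have h1 : stPre m y = stPre m y' := f.injective (congrArg Subtype.val h)
      have := stPre_glueQOf m y
      rw [h1, stPre_glueQOf m y'] at this
      exact (Option.some.inj this).symm
    · rintro ⟨x, hx⟩
      have hmem : f.symm x ∈ (glue P'' St'' m).T := by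
        apply (hT (f.symm x)).2
        rw [f.apply_symm_apply]
        exact hx
      obtain ⟨y, hy, -⟩ := hmem
      refine ⟨y, Subtype.ext ?_⟩
      show f (stPre m y) = x
      rw [glueQOf_fiber_unique m (stPre_glueQOf m y) hy, f.apply_symm_apply]
    · intro y y'
      show St''.lt y y' ↔ P.lt (f (stPre m y)) (f (stPre m y'))
      constructor
      · intro h
        exact (hStD _ _ h).elim
      · intro h
        exact (main_lt _ _ y y' (stPre_glueQOf m y) (stPre_glueQOf m y')
          ((hlt _ _).2 h)).elim
    · intro y y'
      show St''.evord y y' ↔ P.evord (f (stPre m y)) (f (stPre m y'))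
      rw [← hev (stPre m y) (stPre m y'),
        main_ev _ _ y y' (stPre_glueQOf m y) (stPre_glueQOf m y')]
    · intro y
      show y ∈ St''.S ↔ f (stPre m y) ∈ P.T \ AA P
      by_cases hy : y ∈ St''.S
      · rw [stPre_inl m hy]
        refine iff_of_true hy ⟨?_, hnotAA _⟩
        have h := hpreT y
        rw [stPre_inl m hy] at h
        exact h
      · rw [stPre_inr m hy]
        exact iff_of_false hy (fun h => h.2 (hinAA _))
    · intro y
      show y ∈ St''.T ↔ f (stPre m y) ∈ (Set.univ : Set P.carrier)
      exact iff_of_true (by rw [hStT]; trivial) trivial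
    · intro y
      show P.lab (f (stPre m y)) = St''.lab y
      rw [hlab (stPre m y)]
      exact main_lab _ y (stPre_glueQOf m y)

end PreIpomset
end HDA

namespace HDA

open PreIpomset

/-- Every interval ipomset `P` has a unique (up to isomorphism)
presentation `P = P' * ⟨V,U,U⟩` with `⟨V,U,U⟩` a starter on the target interface of
`P` and `P' ∈ iPoms^q`. -/
theorem unique_presentation {σ : Type} [Finite σ] (P : PreIpomset σ)
    (hP : P.IsIpomset) :
    ∃ P' St : PreIpomset σ, P'.IsIpomset ∧ InQ P' ∧ IsStarter St ∧
      Iso P.tgtIface St.conclistOf ∧ GlueRel P' St P ∧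
      (∀ P'' St'' : PreIpomset σ, P''.IsIpomset → InQ P'' → IsStarter St'' →
        GlueRel P'' St'' P → Iso P'' P' ∧ Iso St'' St) := by
  refine ⟨rsP P, rsSt P, rsP_isIpomset hP, rsP_inQ hP, rsSt_isStarter hP,
    rs_tgtIface_iso P, rs_glueRel hP, ?_⟩
  intro P'' St'' h1 h2 h3 h4
  obtain ⟨m, hiso⟩ := h4
  exact presentation_unique hP h1 h3 (goodQ_of_inQ h2) m hiso

end HDA
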